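/- arXiv:math/0612494 — 4 statements merged into one kernel-verified Lean document; each statement's English description precedes it below -/
import Mathlib

section
/- Let s ≥ 1 be an integer, Q(x) = 3 sech²(x/2), 𝓛 w = −w'' − Q w + w, and define r_{s+1} = −((s + 3/2)/(s − 3/2)) Q and 𝓛_{s+1} w = ∂_x^{2s+2} w + r_{s+1} ∂_x^{2s} w. Then there exists C > 0 such that for every complex-valued Schwartz function w on ℝ, | Re ∫_ℝ ∂_x(𝓛 w) · \overline{𝓛_{s+1} w} dx | ≤ C ‖w‖_{H^s(ℝ)}². -/
open MeasureTheory ComplexConjugate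

/-- The KdV soliton profile `Q(x) = 3 sech²(x/2)`. -/
noncomputable def Q (x : ℝ) : ℝ := 3 * (1 / Real.cosh (x / 2)) ^ 2

/-- The linearized KdV operator `𝓛 w = −w'' − Q w + w`. -/
noncomputable def Lop (w : ℝ → ℂ) (x : ℝ) : ℂ :=
  -iteratedDeriv 2 w x - (Q x : ℂ) * w x + w x

/-- The multiplier `r_{s+1} = −((s+3/2)/(s−3/2)) Q`. -/
noncomputable def r (s : ℕ) (x : ℝ) : ℝ :=
  -(((s : ℝ) + 3 / 2) / ((s : ℝ) - 3 / 2)) * Q x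

/-- The higher-order operator `𝓛_{s+1} w = ∂ₓ^{2s+2} w + r_{s+1} ∂ₓ^{2s} w`. -/
noncomputable def Ls (s : ℕ) (w : ℝ → ℂ) (x : ℝ) : ℂ :=
  iteratedDeriv (2 * s + 2) w x + (r s x : ℂ) * iteratedDeriv (2 * s) w x

/-- The squared `H^s(ℝ)` norm `Σ_{m ≤ s} ‖∂ₓ^m f‖²_{L²}`. -/
noncomputable def HsSq (s : ℕ) (f : ℝ → ℂ) : ℝ :=
  ∑ m ∈ Finset.range (s + 1), ∫ x : ℝ, ‖iteratedDeriv m f x‖ ^ 2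

open Polynomial Filter


noncomputable section

/-- logistic function -/
def vv (x : ℝ) : ℝ := Real.exp x / (1 + Real.exp x)

lemma one_add_exp_pos (x : ℝ) : 0 < 1 + Real.exp x := by positivity

lemma vv_mem (x : ℝ) : vv x ∈ Set.Icc (0:ℝ) 1 := by
  have h := one_add_exp_pos x
  constructor
  · exact div_nonneg (Real.exp_pos x).le h.le
  · unfold vv; rw [div_le_one h]; linarith [Real.exp_pos x]

lemma hasDerivAt_vv (x : ℝ) : HasDerivAt vv (vv x - vv x ^ 2) x := by
  have h := one_add_exp_pos x
  have hd : HasDerivAt (fun y : ℝ => Real.exp y / (1 + Real.exp y))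
      ((Real.exp x * (1 + Real.exp x) - Real.exp x * Real.exp x) / (1 + Real.exp x) ^ 2) x := by
    have h2 : HasDerivAt (fun y : ℝ => 1 + Real.exp y) (Real.exp x) x := by
      exact (Real.hasDerivAt_exp x).const_add 1
    exact (Real.hasDerivAt_exp x).div h2 h.ne'
  convert hd using 1
  · rfl
  unfold vv
  field_simp

lemma continuous_vv : Continuous vv :=
  Real.continuous_exp.div (continuous_const.add Real.continuous_exp)
    (fun x => (one_add_exp_pos x).ne')

/-- evaluation of a polynomial along the logistic function -/
def PF (p : Polynomial ℝ) (x : ℝ) : ℝ := p.eval (vv x)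

/-- the "derivative" polynomial : (p ∘ v)' = (pd p) ∘ v -/
def pd (p : Polynomial ℝ) : Polynomial ℝ := p.derivative * (X - X ^ 2)

lemma hasDerivAt_PF (p : Polynomial ℝ) (x : ℝ) : HasDerivAt (PF p) (PF (pd p) x) x := by
  have h := (p.hasDerivAt (vv x)).comp x (hasDerivAt_vv x)
  refine h.congr_deriv ?_
  simp [PF, pd, mul_comm]

lemma continuous_PF (p : Polynomial ℝ) : Continuous (PF p) :=
  p.continuous.comp continuous_vv

lemma PF_bound (p : Polynomial ℝ) : ∃ C : ℝ, 0 ≤ C ∧ ∀ x, |PF p x| ≤ C := by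
  obtain ⟨C, hC⟩ := (isCompact_Icc (a := (0:ℝ)) (b := 1)).exists_bound_of_continuousOn
    p.continuous.continuousOn
  exact ⟨max C 0, le_max_right _ _, fun x => le_trans
    (by simpa [PF] using hC (vv x) (vv_mem x)) (le_max_left _ _)⟩

lemma PF_one (x : ℝ) : PF 1 x = 1 := by simp [PF]
lemma PF_zero (x : ℝ) : PF 0 x = 0 := by simp [PF]
lemma PF_add (p q : Polynomial ℝ) (x : ℝ) : PF (p + q) x = PF p x + PF q x := by simp [PF]
lemma PF_mul (p q : Polynomial ℝ) (x : ℝ) : PF (p * q) x = PF p x * PF q x := by simp [PF]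
lemma PF_smul (c : ℝ) (p : Polynomial ℝ) (x : ℝ) : PF (c • p) x = c * PF p x := by simp [PF]
lemma pd_one : pd (1 : Polynomial ℝ) = 0 := by simp [pd]
lemma pd_smul (c : ℝ) (p : Polynomial ℝ) : pd (c • p) = c • pd p := by
  simp [pd, smul_mul_assoc]

/-- iterated Schwartz derivative -/
def SD (n : ℕ) (w : SchwartzMap ℝ ℂ) : SchwartzMap ℝ ℂ := (⇑(SchwartzMap.derivCLM ℝ ℂ))^[n] w

lemma SD_coe (n : ℕ) (w : SchwartzMap ℝ ℂ) : ⇑(SD n w) = iteratedDeriv n (⇑w) := by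
  induction n with
  | zero => simp [SD, iteratedDeriv_zero]
  | succ n ih =>
      rw [iteratedDeriv_succ, ← ih]
      have : SD (n+1) w = SchwartzMap.derivCLM ℝ ℂ (SD n w) := by
        simp [SD, Function.iterate_succ_apply']
      rw [this]
      funext x
      exact SchwartzMap.derivCLM_apply ℝ (SD n w) x

lemma schwartz_bound (f : SchwartzMap ℝ ℂ) : ∃ C : ℝ, 0 ≤ C ∧ ∀ x, ‖f x‖ ≤ C := by
  refine ⟨SchwartzMap.seminorm ℝ 0 0 f, apply_nonneg _ _, fun x => ?_⟩
  have := SchwartzMap.norm_pow_mul_le_seminorm ℝ f 0 x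
  simpa using this

lemma schwartz_tendsto_zero (f : SchwartzMap ℝ ℂ) :
    Tendsto (⇑f) atTop (nhds 0) ∧ Tendsto (⇑f) atBot (nhds 0) := by
  have h : Tendsto (⇑f) (Filter.cocompact ℝ) (nhds 0) := by
    have := f.toZeroAtInfty.zero_at_infty'
    exact this
  rw [cocompact_eq_atBot_atTop] at h
  exact ⟨h.mono_left le_sup_right, h.mono_left le_sup_left⟩

end

noncomputable section
open SchwartzMap

/-- the basic bilinear quantity -/
def Bq (p : Polynomial ℝ) (a b : ℕ) (w : SchwartzMap ℝ ℂ) : ℝ :=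
  ∫ x : ℝ, PF p x * (iteratedDeriv a (⇑w) x * conj (iteratedDeriv b (⇑w) x)).re

lemma integrable_core (p : Polynomial ℝ) (a b : ℕ) (w : SchwartzMap ℝ ℂ) :
    Integrable (fun x : ℝ =>
      PF p x * (iteratedDeriv a (⇑w) x * conj (iteratedDeriv b (⇑w) x)).re) := by
  obtain ⟨Cp, hCp0, hCp⟩ := PF_bound p
  obtain ⟨Ca, hCa0, hCa⟩ := schwartz_bound (SD a w)
  have hcont : Continuous (fun x : ℝ =>
      PF p x * (iteratedDeriv a (⇑w) x * conj (iteratedDeriv b (⇑w) x)).re) := by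
    rw [← SD_coe, ← SD_coe]
    exact (continuous_PF p).mul (Complex.continuous_re.comp
      (((SD a w).continuous).mul (Complex.continuous_conj.comp (SD b w).continuous)))
  refine Integrable.mono' (((SD b w).integrable.norm).const_mul (Cp * Ca))
    hcont.aestronglyMeasurable (Filter.Eventually.of_forall fun x => ?_)
  rw [← SD_coe, ← SD_coe]
  have h1 : |(SD a w x * conj (SD b w x)).re| ≤ ‖SD a w x‖ * ‖SD b w x‖ := by
    calc |(SD a w x * conj (SD b w x)).re| ≤ ‖SD a w x * conj (SD b w x)‖ :=
          Complex.abs_re_le_norm _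
    _ = ‖SD a w x‖ * ‖SD b w x‖ := by rw [norm_mul, RCLike.norm_conj]
  have := mul_le_mul (hCp x) h1 (abs_nonneg _) hCp0
  calc ‖PF p x * (SD a w x * conj (SD b w x)).re‖
      = |PF p x| * |(SD a w x * conj (SD b w x)).re| := by
        rw [Real.norm_eq_abs, abs_mul]
    _ ≤ Cp * (‖SD a w x‖ * ‖SD b w x‖) := this
    _ ≤ Cp * (Ca * ‖SD b w x‖) := by
        have := mul_le_mul_of_nonneg_right (hCa x) (norm_nonneg (SD b w x))
        nlinarith [norm_nonneg (SD b w x)]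
    _ = Cp * Ca * ‖SD b w x‖ := by ring

lemma integrable_coreC (p : Polynomial ℝ) (a b : ℕ) (w : SchwartzMap ℝ ℂ) :
    Integrable (fun x : ℝ =>
      (PF p x : ℂ) * (iteratedDeriv a (⇑w) x * conj (iteratedDeriv b (⇑w) x))) := by
  obtain ⟨Cp, hCp0, hCp⟩ := PF_bound p
  obtain ⟨Ca, hCa0, hCa⟩ := schwartz_bound (SD a w)
  have hcont : Continuous (fun x : ℝ =>
      (PF p x : ℂ) * (iteratedDeriv a (⇑w) x * conj (iteratedDeriv b (⇑w) x))) := by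
    rw [← SD_coe, ← SD_coe]
    exact (Complex.continuous_ofReal.comp (continuous_PF p)).mul
      (((SD a w).continuous).mul (Complex.continuous_conj.comp (SD b w).continuous))
  refine Integrable.mono' (((SD b w).integrable.norm).const_mul (Cp * Ca))
    hcont.aestronglyMeasurable (Filter.Eventually.of_forall fun x => ?_)
  rw [← SD_coe, ← SD_coe]
  calc ‖(PF p x : ℂ) * (SD a w x * conj (SD b w x))‖
      = |PF p x| * (‖SD a w x‖ * ‖SD b w x‖) := by
        rw [norm_mul, norm_mul, RCLike.norm_conj, Complex.norm_real, Real.norm_eq_abs]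
    _ ≤ Cp * (‖SD a w x‖ * ‖SD b w x‖) :=
        mul_le_mul_of_nonneg_right (hCp x) (by positivity)
    _ ≤ Cp * (Ca * ‖SD b w x‖) :=
        mul_le_mul_of_nonneg_left
          (mul_le_mul_of_nonneg_right (hCa x) (norm_nonneg _)) hCp0
    _ = Cp * Ca * ‖SD b w x‖ := by ring

/-- integral of a derivative of a nice function vanishes -/
lemma integral_deriv_zero (h h' : ℝ → ℝ) (hd : ∀ x, HasDerivAt h (h' x) x)
    (hi : Integrable h') (ht : Tendsto h atTop (nhds 0)) (hb : Tendsto h atBot (nhds 0)) :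
    ∫ x : ℝ, h' x = 0 := by
  have h1 : ∫ x in Set.Ioi (0:ℝ), h' x = 0 - h 0 :=
    integral_Ioi_of_hasDerivAt_of_tendsto' (fun x _ => hd x) hi.integrableOn ht
  have h2 : ∫ x in Set.Iic (0:ℝ), h' x = h 0 - 0 :=
    integral_Iic_of_hasDerivAt_of_tendsto' (fun x _ => hd x) hi.integrableOn hb
  have h3 : (∫ x in Set.Iic (0:ℝ), h' x) + ∫ x in Set.Ioi (0:ℝ), h' x = ∫ x : ℝ, h' x :=
    intervalIntegral.integral_Iic_add_Ioi hi.integrableOn hi.integrableOn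
  rw [← h3, h1, h2]; ring

end

noncomputable section

lemma hasDerivAt_SD (n : ℕ) (w : SchwartzMap ℝ ℂ) (x : ℝ) :
    HasDerivAt (⇑(SD n w)) (SD (n+1) w x) x := by
  have h := ((SD n w).differentiableAt (x := x)).hasDerivAt
  have h2 : deriv (⇑(SD n w)) x = SD (n+1) w x := by
    rw [SD_coe, SD_coe, ← iteratedDeriv_succ]
  rwa [h2] at h

lemma Bq_ibp (p : Polynomial ℝ) (a b : ℕ) (w : SchwartzMap ℝ ℂ) :
    Bq p a (b+1) w = -Bq (pd p) a b w - Bq p (a+1) b w := by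
  set H : ℝ → ℝ := fun x => PF p x * ((SD a w) x * conj ((SD b w) x)).re with hH
  set H' : ℝ → ℝ := fun x =>
      PF (pd p) x * ((SD a w) x * conj ((SD b w) x)).re
    + PF p x * ((SD (a+1) w) x * conj ((SD b w) x)).re
    + PF p x * ((SD a w) x * conj ((SD (b+1) w) x)).re with hH'
  have hder : ∀ x, HasDerivAt H (H' x) x := by
    intro x
    have hf := hasDerivAt_SD a w x
    have hgconj : HasDerivAt (fun y => conj ((SD b w) y)) (conj ((SD (b+1) w) x)) x := by
      have := (hasDerivAt_SD b w x).star
      simpa [RCLike.star_def] using this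
    have hmul := hf.mul hgconj
    have hre := Complex.reCLM.hasFDerivAt.comp_hasDerivAt x hmul
    have htot := (hasDerivAt_PF p x).mul hre
    refine htot.congr_deriv ?_
    simp only [Function.comp_apply, Complex.reCLM_apply, Complex.add_re, Function.comp_def, hH', Pi.mul_apply]
    ring
  have hint1 := integrable_core (pd p) a b w
  have hint2 := integrable_core p (a+1) b w
  have hint3 := integrable_core p a (b+1) w
  have hSD : ∀ (q : Polynomial ℝ) (α β : ℕ),
      (fun x : ℝ => PF q x * ((SD α w) x * conj ((SD β w) x)).re)
      = fun x : ℝ => PF q x * (iteratedDeriv α (⇑w) x * conj (iteratedDeriv β (⇑w) x)).re := by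
    intro q α β; funext x; rw [SD_coe, SD_coe]
  have hint1' : Integrable (fun x : ℝ => PF (pd p) x * ((SD a w) x * conj ((SD b w) x)).re) := by
    rw [hSD]; exact hint1
  have hint2' : Integrable (fun x : ℝ => PF p x * ((SD (a+1) w) x * conj ((SD b w) x)).re) := by
    rw [hSD]; exact hint2
  have hint3' : Integrable (fun x : ℝ => PF p x * ((SD a w) x * conj ((SD (b+1) w) x)).re) := by
    rw [hSD]; exact hint3
  have hintH' : Integrable H' := (hint1'.add hint2').add hint3'
  obtain ⟨Cp, hCp0, hCp⟩ := PF_bound p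
  obtain ⟨Ca, hCa0, hCa⟩ := schwartz_bound (SD a w)
  have hbound : ∀ x, ‖H x‖ ≤ (Cp * Ca) * ‖(SD b w) x‖ := by
    intro x
    have h1 : |((SD a w) x * conj ((SD b w) x)).re| ≤ ‖(SD a w) x‖ * ‖(SD b w) x‖ := by
      calc |((SD a w) x * conj ((SD b w) x)).re| ≤ ‖(SD a w) x * conj ((SD b w) x)‖ :=
            Complex.abs_re_le_norm _
      _ = ‖(SD a w) x‖ * ‖(SD b w) x‖ := by rw [norm_mul, RCLike.norm_conj]
    calc ‖H x‖ = |PF p x| * |((SD a w) x * conj ((SD b w) x)).re| := by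
          rw [hH]; rw [Real.norm_eq_abs, abs_mul]
      _ ≤ Cp * (‖(SD a w) x‖ * ‖(SD b w) x‖) :=
          mul_le_mul (hCp x) h1 (abs_nonneg _) hCp0
      _ ≤ Cp * (Ca * ‖(SD b w) x‖) :=
          mul_le_mul_of_nonneg_left
            (mul_le_mul_of_nonneg_right (hCa x) (norm_nonneg _)) hCp0
      _ = (Cp * Ca) * ‖(SD b w) x‖ := by ring
  have hzero := schwartz_tendsto_zero (SD b w)
  have hnormT : Tendsto (fun x => (Cp * Ca) * ‖(SD b w) x‖) atTop (nhds 0) := by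
    have := (hzero.1.norm).const_mul (Cp * Ca)
    simpa using this
  have hnormB : Tendsto (fun x => (Cp * Ca) * ‖(SD b w) x‖) atBot (nhds 0) := by
    have := (hzero.2.norm).const_mul (Cp * Ca)
    simpa using this
  have hT : Tendsto H atTop (nhds 0) := squeeze_zero_norm hbound hnormT
  have hB : Tendsto H atBot (nhds 0) := squeeze_zero_norm hbound hnormB
  have hzero' : ∫ x : ℝ, H' x = 0 := integral_deriv_zero H H' hder hintH' hT hB
  have hsplit : ∫ x : ℝ, H' x =
      Bq (pd p) a b w + Bq p (a+1) b w + Bq p a (b+1) w := by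
    rw [hH']
    have h12 : Integrable (fun x : ℝ =>
        PF (pd p) x * ((SD a w) x * conj ((SD b w) x)).re
        + PF p x * ((SD (a+1) w) x * conj ((SD b w) x)).re) := hint1'.add hint2'
    rw [integral_add h12 hint3', integral_add hint1' hint2']
    simp only [Bq]
    rw [hSD, hSD, hSD]
  rw [hsplit] at hzero'
  linarith

lemma Bq_symm (p : Polynomial ℝ) (a b : ℕ) (w : SchwartzMap ℝ ℂ) :
    Bq p a b w = Bq p b a w := by
  have key : ∀ z y : ℂ, (z * conj y).re = (y * conj z).re := by
    intro z y
    simp [Complex.mul_re, Complex.conj_re, Complex.conj_im]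
    ring
  simp only [Bq]
  congr 1
  funext x
  rw [key]

lemma Bq_zero (a b : ℕ) (w : SchwartzMap ℝ ℂ) : Bq 0 a b w = 0 := by
  simp [Bq, PF_zero]

lemma Bq_add (p q : Polynomial ℝ) (a b : ℕ) (w : SchwartzMap ℝ ℂ) :
    Bq (p + q) a b w = Bq p a b w + Bq q a b w := by
  simp only [Bq]
  rw [← integral_add (integrable_core p a b w) (integrable_core q a b w)]
  congr 1
  funext x
  rw [PF_add]
  ring

lemma Bq_smul (c : ℝ) (p : Polynomial ℝ) (a b : ℕ) (w : SchwartzMap ℝ ℂ) :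
    Bq (c • p) a b w = c * Bq p a b w := by
  simp only [Bq]
  rw [← integral_const_mul]
  congr 1
  funext x
  rw [PF_smul]
  ring

lemma Bq_G0 (p : Polynomial ℝ) (m : ℕ) (w : SchwartzMap ℝ ℂ) :
    Bq p m (m+1) w = -(1/2) * Bq (pd p) m m w := by
  have h := Bq_ibp p m m w
  have h2 := Bq_symm p (m+1) m w
  linarith

end

noncomputable section

def HsSq' (s : ℕ) (f : ℝ → ℂ) : ℝ :=
  ∑ m ∈ Finset.range (s + 1), ∫ x : ℝ, ‖iteratedDeriv m f x‖ ^ 2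

lemma HsSq'_nonneg (s : ℕ) (f : ℝ → ℂ) : 0 ≤ HsSq' s f :=
  Finset.sum_nonneg fun m _ => integral_nonneg fun x => by positivity

lemma term_le_HsSq' (s m : ℕ) (hm : m ≤ s) (f : ℝ → ℂ) :
    ∫ x : ℝ, ‖iteratedDeriv m f x‖ ^ 2 ≤ HsSq' s f :=
  Finset.single_le_sum (f := fun m => ∫ x : ℝ, ‖iteratedDeriv m f x‖ ^ 2)
    (fun i _ => integral_nonneg fun x => by positivity)
    (Finset.mem_range.mpr (by omega))

def Ctrl (s : ℕ) (X : SchwartzMap ℝ ℂ → ℝ) : Prop :=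
  ∃ C : ℝ, ∀ w, |X w| ≤ C * HsSq' s (⇑w)

lemma Ctrl.congr {s : ℕ} {X Y : SchwartzMap ℝ ℂ → ℝ} (h : ∀ w, X w = Y w)
    (hY : Ctrl s Y) : Ctrl s X := by
  obtain ⟨C, hC⟩ := hY
  exact ⟨C, fun w => by rw [h w]; exact hC w⟩

lemma Ctrl.zero {s : ℕ} : Ctrl s (fun _ => 0) := ⟨0, fun w => by simp⟩

lemma Ctrl.neg {s : ℕ} {X : SchwartzMap ℝ ℂ → ℝ} (h : Ctrl s X) :
    Ctrl s (fun w => -X w) := by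
  obtain ⟨C, hC⟩ := h
  exact ⟨C, fun w => by rw [abs_neg]; exact hC w⟩

lemma Ctrl.add {s : ℕ} {X Y : SchwartzMap ℝ ℂ → ℝ} (hX : Ctrl s X) (hY : Ctrl s Y) :
    Ctrl s (fun w => X w + Y w) := by
  obtain ⟨C, hC⟩ := hX
  obtain ⟨D, hD⟩ := hY
  refine ⟨C + D, fun w => ?_⟩
  calc |X w + Y w| ≤ |X w| + |Y w| := abs_add_le _ _
    _ ≤ C * HsSq' s (⇑w) + D * HsSq' s (⇑w) := add_le_add (hC w) (hD w)
    _ = (C + D) * HsSq' s (⇑w) := by ring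

lemma Ctrl.sub {s : ℕ} {X Y : SchwartzMap ℝ ℂ → ℝ} (hX : Ctrl s X) (hY : Ctrl s Y) :
    Ctrl s (fun w => X w - Y w) := by
  have := hX.add hY.neg
  exact Ctrl.congr (fun w => by ring) this

lemma Ctrl.cmul {s : ℕ} (c : ℝ) {X : SchwartzMap ℝ ℂ → ℝ} (h : Ctrl s X) :
    Ctrl s (fun w => c * X w) := by
  obtain ⟨C, hC⟩ := h
  refine ⟨|c| * C, fun w => ?_⟩
  rw [abs_mul, mul_assoc]
  exact mul_le_mul_of_nonneg_left (hC w) (abs_nonneg c)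

lemma integrable_normsq (m : ℕ) (w : SchwartzMap ℝ ℂ) :
    Integrable (fun x : ℝ => ‖iteratedDeriv m (⇑w) x‖ ^ 2) := by
  obtain ⟨Cm, hCm0, hCm⟩ := schwartz_bound (SD m w)
  rw [← SD_coe]
  refine Integrable.mono' (((SD m w).integrable.norm).const_mul Cm)
    (((SD m w).continuous.norm).pow 2).aestronglyMeasurable
    (Filter.Eventually.of_forall fun x => ?_)
  have h := norm_nonneg (SD m w x)
  rw [Real.norm_eq_abs, abs_of_nonneg (by positivity)]
  calc ‖(SD m w) x‖ ^ 2 = ‖(SD m w) x‖ * ‖(SD m w) x‖ := sq ‖(SD m w) x‖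
    _ ≤ Cm * ‖(SD m w) x‖ := mul_le_mul_of_nonneg_right (hCm x) h

lemma integrable_normprod (a b : ℕ) (w : SchwartzMap ℝ ℂ) :
    Integrable (fun x : ℝ => ‖iteratedDeriv a (⇑w) x‖ * ‖iteratedDeriv b (⇑w) x‖) := by
  obtain ⟨Ca, hCa0, hCa⟩ := schwartz_bound (SD a w)
  rw [← SD_coe, ← SD_coe]
  refine Integrable.mono' (((SD b w).integrable.norm).const_mul Ca)
    ((((SD a w).continuous.norm).mul ((SD b w).continuous.norm))).aestronglyMeasurable
    (Filter.Eventually.of_forall fun x => ?_)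
  rw [Real.norm_eq_abs, abs_of_nonneg (by positivity)]
  exact mul_le_mul_of_nonneg_right (hCa x) (norm_nonneg _)

lemma ctrl_Bq {s : ℕ} (p : Polynomial ℝ) {a b : ℕ} (ha : a ≤ s) (hb : b ≤ s) :
    Ctrl s (fun w => Bq p a b w) := by
  obtain ⟨Cp, hCp0, hCp⟩ := PF_bound p
  refine ⟨Cp, fun w => ?_⟩
  have habs : |Bq p a b w| ≤ ∫ x : ℝ,
      |PF p x * (iteratedDeriv a (⇑w) x * conj (iteratedDeriv b (⇑w) x)).re| := by
    have h := norm_integral_le_integral_norm (μ := volume)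
      (f := fun x : ℝ => PF p x * (iteratedDeriv a (⇑w) x * conj (iteratedDeriv b (⇑w) x)).re)
    simp only [Real.norm_eq_abs] at h
    simp only [Bq]
    exact h
  have hmaj : Integrable (fun x : ℝ =>
      Cp * (‖iteratedDeriv a (⇑w) x‖ * ‖iteratedDeriv b (⇑w) x‖)) :=
    (integrable_normprod a b w).const_mul Cp
  have hptw : ∀ x : ℝ,
      |PF p x * (iteratedDeriv a (⇑w) x * conj (iteratedDeriv b (⇑w) x)).re| ≤
      Cp * (‖iteratedDeriv a (⇑w) x‖ * ‖iteratedDeriv b (⇑w) x‖) := by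
    intro x
    rw [abs_mul]
    have h1 : |(iteratedDeriv a (⇑w) x * conj (iteratedDeriv b (⇑w) x)).re| ≤
        ‖iteratedDeriv a (⇑w) x‖ * ‖iteratedDeriv b (⇑w) x‖ := by
      calc |(iteratedDeriv a (⇑w) x * conj (iteratedDeriv b (⇑w) x)).re|
          ≤ ‖iteratedDeriv a (⇑w) x * conj (iteratedDeriv b (⇑w) x)‖ := Complex.abs_re_le_norm _
        _ = ‖iteratedDeriv a (⇑w) x‖ * ‖iteratedDeriv b (⇑w) x‖ := by
            rw [norm_mul, RCLike.norm_conj]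
    exact mul_le_mul (hCp x) h1 (abs_nonneg _) hCp0
  have h2 : (∫ x : ℝ,
      |PF p x * (iteratedDeriv a (⇑w) x * conj (iteratedDeriv b (⇑w) x)).re|) ≤
      ∫ x : ℝ, Cp * (‖iteratedDeriv a (⇑w) x‖ * ‖iteratedDeriv b (⇑w) x‖) := by
    refine integral_mono_of_nonneg (Filter.Eventually.of_forall fun x => abs_nonneg _)
      hmaj (Filter.Eventually.of_forall hptw)
  have h3 : (∫ x : ℝ, Cp * (‖iteratedDeriv a (⇑w) x‖ * ‖iteratedDeriv b (⇑w) x‖))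
      = Cp * ∫ x : ℝ, ‖iteratedDeriv a (⇑w) x‖ * ‖iteratedDeriv b (⇑w) x‖ :=
    integral_const_mul Cp _
  have h4 : (∫ x : ℝ, ‖iteratedDeriv a (⇑w) x‖ * ‖iteratedDeriv b (⇑w) x‖) ≤
      ∫ x : ℝ, (‖iteratedDeriv a (⇑w) x‖ ^ 2 + ‖iteratedDeriv b (⇑w) x‖ ^ 2) / 2 := by
    refine integral_mono (integrable_normprod a b w) ?_ fun x => ?_
    · exact ((integrable_normsq a w).add (integrable_normsq b w)).div_const 2
    · nlinarith [sq_nonneg (‖iteratedDeriv a (⇑w) x‖ - ‖iteratedDeriv b (⇑w) x‖)]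
  have h5 : (∫ x : ℝ, (‖iteratedDeriv a (⇑w) x‖ ^ 2 + ‖iteratedDeriv b (⇑w) x‖ ^ 2) / 2)
      = ((∫ x : ℝ, ‖iteratedDeriv a (⇑w) x‖ ^ 2) + ∫ x : ℝ, ‖iteratedDeriv b (⇑w) x‖ ^ 2) / 2 := by
    rw [integral_div, integral_add (integrable_normsq a w) (integrable_normsq b w)]
  have h6 := term_le_HsSq' s a ha (⇑w)
  have h7 := term_le_HsSq' s b hb (⇑w)
  have hH := HsSq'_nonneg s (⇑w)
  calc |Bq p a b w| ≤ Cp * ∫ x : ℝ, ‖iteratedDeriv a (⇑w) x‖ * ‖iteratedDeriv b (⇑w) x‖ := by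
        rw [← h3]; exact le_trans habs h2
    _ ≤ Cp * (((∫ x : ℝ, ‖iteratedDeriv a (⇑w) x‖ ^ 2)
          + ∫ x : ℝ, ‖iteratedDeriv b (⇑w) x‖ ^ 2) / 2) := by
        refine mul_le_mul_of_nonneg_left ?_ hCp0
        rw [← h5]; exact h4
    _ ≤ Cp * HsSq' s (⇑w) := by
        refine mul_le_mul_of_nonneg_left ?_ hCp0
        linarith

end

noncomputable section

lemma ctrl_G1sorted (s : ℕ) : ∀ b : ℕ, ∀ p : Polynomial ℝ, ∀ a : ℕ, a ≤ b → a + b ≤ 2*s+1 →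
    Ctrl s (fun w => Bq p a b w) := by
  intro b
  induction b using Nat.strong_induction_on with
  | _ b ih =>
    intro p a hab habs
    by_cases hb : b ≤ s
    · exact ctrl_Bq p (le_trans hab hb) hb
    · push_neg at hb
      have has : a ≤ s := by omega
      by_cases hcase : a = s ∧ b = s + 1
      · obtain ⟨ha', hb'⟩ := hcase
        subst ha' hb'
        refine Ctrl.congr (fun w => Bq_G0 p a w) ?_
        exact (ctrl_Bq (pd p) le_rfl le_rfl).cmul (-(1/2))
      · obtain ⟨b', rfl⟩ : ∃ b', b = b' + 1 := ⟨b - 1, by omega⟩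
        have hkey : a + 1 ≤ b' := by omega
        refine Ctrl.congr (fun w => Bq_ibp p a b' w) ?_
        have c1 := ih b' (by omega) (pd p) a (by omega) (by omega)
        have c2 := ih b' (by omega) p (a+1) hkey (by omega)
        exact Ctrl.congr (fun w => by ring) (c1.neg.sub c2)

lemma ctrl_G1 (s : ℕ) (p : Polynomial ℝ) (a b : ℕ) (habs : a + b ≤ 2*s+1) :
    Ctrl s (fun w => Bq p a b w) := by
  rcases le_total a b with h | h
  · exact ctrl_G1sorted s b p a h habs
  · exact Ctrl.congr (fun w => Bq_symm p a b w) (ctrl_G1sorted s a p b h (by omega))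

lemma Bq_one_odd (k : ℕ) : ∀ (a : ℕ) (w : SchwartzMap ℝ ℂ),
    Bq (1 : Polynomial ℝ) a (a + (2*k+1)) w = 0 := by
  induction k with
  | zero =>
    intro a w
    show Bq 1 a (a + 1) w = 0
    rw [Bq_G0, pd_one, Bq_zero]
    ring
  | succ k ih =>
    intro a w
    have h : a + (2*(k+1)+1) = (a + (2*k+2)) + 1 := by omega
    rw [h, Bq_ibp, pd_one, Bq_zero]
    have h2 : a + (2*k+2) = (a+1) + (2*k+1) := by omega
    rw [h2, ih (a+1) w]
    ring

lemma ctrl_H1 (s : ℕ) : ∀ t : ℕ, t ≤ s+1 → ∀ p : Polynomial ℝ,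
    Ctrl s (fun w => Bq p (s+1-t) (s+1+t) w - (-1:ℝ)^t * Bq p (s+1) (s+1) w) := by
  intro t
  induction t with
  | zero =>
    intro _ p
    refine Ctrl.congr (fun w => ?_) Ctrl.zero
    simp
  | succ t ih =>
    intro ht p
    have h1 : s+1-(t+1) = s - t := by omega
    have h2 : (s - t) + 1 = s+1-t := by omega
    have h3 : s+1+(t+1) = (s+1+t)+1 := by omega
    have c1 : Ctrl s (fun w => Bq (pd p) (s-t) (s+1+t) w) :=
      ctrl_G1 s (pd p) (s-t) (s+1+t) (by omega)
    have c2 := ih (by omega) p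
    refine Ctrl.congr (fun w => ?_) (c1.neg.sub c2)
    rw [h1, h3, Bq_ibp p (s-t) (s+1+t) w, h2]
    ring

lemma ctrl_H2 (s : ℕ) : ∀ t : ℕ, t ≤ s+1 → ∀ p : Polynomial ℝ,
    Ctrl s (fun w => Bq p (s+1-t) (s+2+t) w
      - ((-1:ℝ)^(t+1) * ((t:ℝ) + 1/2)) * Bq (pd p) (s+1) (s+1) w) := by
  intro t
  induction t with
  | zero =>
    intro _ p
    refine Ctrl.congr (fun w => ?_) Ctrl.zero
    have h := Bq_G0 p (s+1) w
    simp only [Nat.sub_zero, Nat.add_zero, Nat.cast_zero]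
    have h2 : s + 2 + 0 = (s+1)+1 := by omega
    rw [h2, h]
    ring
  | succ t ih =>
    intro ht p
    have h1 : s+1-(t+1) = s - t := by omega
    have h2 : (s - t) + 1 = s+1-t := by omega
    have h3 : s+2+(t+1) = (s+2+t)+1 := by omega
    have c1 := ctrl_H1 s (t+1) (by omega) (pd p)
    have c2 := ih (by omega) p
    refine Ctrl.congr (fun w => ?_) (c1.neg.sub c2)
    have h4 : s+1-(t+1) = s - t := by omega
    have h5 : s+1+(t+1) = s+2+t := by omega
    rw [h1, h3, Bq_ibp p (s-t) (s+2+t) w, h2]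
    rw [h4, h5] at *
    push_cast
    ring

end


noncomputable section

lemma HsSq'_eq (s : ℕ) (f : ℝ → ℂ) : HsSq' s f = HsSq s f := rfl

/-- Q as a polynomial in the logistic function -/
def pQ : Polynomial ℝ := Polynomial.C 12 * (Polynomial.X - Polynomial.X ^ 2)

lemma Q_eq (x : ℝ) : Q x = PF pQ x := by
  have ht : (0:ℝ) < Real.exp (x/2) := Real.exp_pos _
  have hx : Real.exp x = Real.exp (x/2) * Real.exp (x/2) := by
    rw [← Real.exp_add]; norm_num
  have hc : Real.cosh (x/2) = (Real.exp (x/2) + Real.exp (-(x/2))) / 2 := Real.cosh_eq _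
  have hneg : Real.exp (-(x/2)) = (Real.exp (x/2))⁻¹ := Real.exp_neg _
  have h1 : (0:ℝ) < 1 + Real.exp x := one_add_exp_pos x
  have hch : Real.cosh (x/2) ≠ 0 := (Real.cosh_pos _).ne'
  unfold Q PF pQ vv
  simp only [Polynomial.eval_mul, Polynomial.eval_C, Polynomial.eval_sub, Polynomial.eval_X,
    Polynomial.eval_pow]
  rw [hc, hneg] at *
  field_simp
  rw [hx]
  ring

/-- r as a polynomial -/
def prP (s : ℕ) : Polynomial ℝ := (-(((s : ℝ) + 3 / 2) / ((s : ℝ) - 3 / 2))) • pQ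

lemma r_eq (s : ℕ) (x : ℝ) : r s x = PF (prP s) x := by
  unfold r prP
  rw [PF_smul, Q_eq]

end

noncomputable section

lemma hasDerivAt_iteratedDeriv (n : ℕ) (w : SchwartzMap ℝ ℂ) (x : ℝ) :
    HasDerivAt (iteratedDeriv n (⇑w)) (iteratedDeriv (n+1) (⇑w) x) x := by
  have h := hasDerivAt_SD n w x
  rwa [SD_coe n w, SD_coe (n+1) w] at h

lemma hasDerivAt_Lop (w : SchwartzMap ℝ ℂ) (x : ℝ) :
    HasDerivAt (fun y => Lop (⇑w) y)
      (-(iteratedDeriv 3 (⇑w) x) - ((PF (pd pQ) x : ℂ) * w x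
        + ((PF pQ x : ℝ) : ℂ) * iteratedDeriv 1 (⇑w) x) + iteratedDeriv 1 (⇑w) x) x := by
  have h2 : HasDerivAt (iteratedDeriv 2 (⇑w)) (iteratedDeriv 3 (⇑w) x) x :=
    hasDerivAt_iteratedDeriv 2 w x
  have hw : HasDerivAt (⇑w) (iteratedDeriv 1 (⇑w) x) x := by
    have := hasDerivAt_iteratedDeriv 0 w x
    rwa [iteratedDeriv_zero] at this
  have hQR : HasDerivAt Q (PF (pd pQ) x) x := by
    have hfun : Q = PF pQ := funext Q_eq
    rw [hfun]; exact hasDerivAt_PF pQ x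
  have hQC : HasDerivAt (fun y : ℝ => ((Q y : ℝ) : ℂ)) ((PF (pd pQ) x : ℂ)) x := by
    have := Complex.ofRealCLM.hasFDerivAt.comp_hasDerivAt x hQR
    exact this
  have hmul := hQC.mul hw
  have htot := (h2.neg.sub hmul).add hw
  have hQx : ((Q x : ℝ) : ℂ) = ((PF pQ x : ℝ) : ℂ) := by rw [Q_eq]
  rw [hQx] at htot
  exact htot

lemma deriv_Lop (w : SchwartzMap ℝ ℂ) (x : ℝ) :
    deriv (fun y => Lop (⇑w) y) x =
      -(iteratedDeriv 3 (⇑w) x) - ((PF (pd pQ) x : ℂ) * w x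
        + ((PF pQ x : ℝ) : ℂ) * iteratedDeriv 1 (⇑w) x) + iteratedDeriv 1 (⇑w) x :=
  (hasDerivAt_Lop w x).deriv

lemma integral_re_term (p : Polynomial ℝ) (a b : ℕ) (w : SchwartzMap ℝ ℂ) :
    (∫ x : ℝ, (PF p x : ℂ) * (iteratedDeriv a (⇑w) x * conj (iteratedDeriv b (⇑w) x))).re
      = Bq p a b w := by
  have h := integral_re (integrable_coreC p a b w)
  simp only [RCLike.re_to_complex] at h
  rw [← h]
  unfold Bq
  congr 1
  funext x
  exact Complex.re_ofReal_mul _ _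

lemma main_split (s : ℕ) (w : SchwartzMap ℝ ℂ) :
    (∫ x : ℝ, deriv (fun y : ℝ => Lop (⇑w) y) x * conj (Ls s (⇑w) x)).re =
      -Bq 1 3 (2*s+2) w - Bq (pd pQ) 0 (2*s+2) w - Bq pQ 1 (2*s+2) w + Bq 1 1 (2*s+2) w
      - Bq (prP s) 3 (2*s) w - Bq (pd pQ * prP s) 0 (2*s) w - Bq (pQ * prP s) 1 (2*s) w
      + Bq (prP s) 1 (2*s) w := by
  set u := ⇑w with hu
  set Tc : Polynomial ℝ → ℕ → ℕ → ℝ → ℂ := fun p a b x =>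
    (PF p x : ℂ) * (iteratedDeriv a u x * conj (iteratedDeriv b u x)) with hTc
  have key : ∀ x : ℝ, deriv (fun y : ℝ => Lop u y) x * conj (Ls s u x) =
      (((((((-Tc 1 3 (2*s+2) x - Tc (pd pQ) 0 (2*s+2) x) - Tc pQ 1 (2*s+2) x)
        + Tc 1 1 (2*s+2) x) - Tc (prP s) 3 (2*s) x) - Tc (pd pQ * prP s) 0 (2*s) x)
        - Tc (pQ * prP s) 1 (2*s) x) + Tc (prP s) 1 (2*s) x) := by
    intro x
    rw [deriv_Lop w x]
    unfold Ls
    rw [show ((r s x : ℝ) : ℂ) = ((PF (prP s) x : ℝ) : ℂ) by rw [r_eq]]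
    simp only [hTc, PF_one, PF_mul, iteratedDeriv_zero, Complex.ofReal_one, Complex.ofReal_mul,
      map_add, map_mul, Complex.conj_ofReal]
    ring
  have i1 := integrable_coreC 1 3 (2*s+2) w
  have i2 := integrable_coreC (pd pQ) 0 (2*s+2) w
  have i3 := integrable_coreC pQ 1 (2*s+2) w
  have i4 := integrable_coreC 1 1 (2*s+2) w
  have i5 := integrable_coreC (prP s) 3 (2*s) w
  have i6 := integrable_coreC (pd pQ * prP s) 0 (2*s) w
  have i7 := integrable_coreC (pQ * prP s) 1 (2*s) w
  have i8 := integrable_coreC (prP s) 1 (2*s) w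
  have j1 : Integrable (fun x : ℝ => -Tc 1 3 (2*s+2) x) := i1.neg
  have j2 : Integrable (fun x : ℝ => -Tc 1 3 (2*s+2) x - Tc (pd pQ) 0 (2*s+2) x) := j1.sub i2
  have j3 : Integrable (fun x : ℝ => -Tc 1 3 (2*s+2) x - Tc (pd pQ) 0 (2*s+2) x
      - Tc pQ 1 (2*s+2) x) := j2.sub i3
  have j4 : Integrable (fun x : ℝ => -Tc 1 3 (2*s+2) x - Tc (pd pQ) 0 (2*s+2) x
      - Tc pQ 1 (2*s+2) x + Tc 1 1 (2*s+2) x) := j3.add i4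
  have j5 : Integrable (fun x : ℝ => -Tc 1 3 (2*s+2) x - Tc (pd pQ) 0 (2*s+2) x
      - Tc pQ 1 (2*s+2) x + Tc 1 1 (2*s+2) x - Tc (prP s) 3 (2*s) x) := j4.sub i5
  have j6 : Integrable (fun x : ℝ => -Tc 1 3 (2*s+2) x - Tc (pd pQ) 0 (2*s+2) x
      - Tc pQ 1 (2*s+2) x + Tc 1 1 (2*s+2) x - Tc (prP s) 3 (2*s) x
      - Tc (pd pQ * prP s) 0 (2*s) x) := j5.sub i6
  have j7 : Integrable (fun x : ℝ => -Tc 1 3 (2*s+2) x - Tc (pd pQ) 0 (2*s+2) x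
      - Tc pQ 1 (2*s+2) x + Tc 1 1 (2*s+2) x - Tc (prP s) 3 (2*s) x
      - Tc (pd pQ * prP s) 0 (2*s) x - Tc (pQ * prP s) 1 (2*s) x) := j6.sub i7
  have hfun : (fun x : ℝ => deriv (fun y : ℝ => Lop u y) x * conj (Ls s u x)) =
      (fun x : ℝ => -Tc 1 3 (2*s+2) x - Tc (pd pQ) 0 (2*s+2) x
      - Tc pQ 1 (2*s+2) x + Tc 1 1 (2*s+2) x - Tc (prP s) 3 (2*s) x
      - Tc (pd pQ * prP s) 0 (2*s) x - Tc (pQ * prP s) 1 (2*s) x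
      + Tc (prP s) 1 (2*s) x) := funext key
  rw [hfun]
  rw [integral_add j7 i8, integral_sub j6 i7, integral_sub j5 i6, integral_sub j4 i5,
    integral_add j3 i4, integral_sub j2 i3, integral_sub j1 i2, integral_neg]
  simp only [Complex.add_re, Complex.sub_re, Complex.neg_re]
  rw [integral_re_term, integral_re_term, integral_re_term, integral_re_term,
    integral_re_term, integral_re_term, integral_re_term, integral_re_term]

end

/-- Higher-order approximate conservation law: the choice of `r_{s+1}` cancels the
top-order terms, so `|Re ∫ ∂ₓ(𝓛 w) · conj(𝓛_{s+1} w)| ≤ C ‖w‖²_{H^s}`. -/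
theorem higher_order_cancellation (s : ℕ) (hs : 1 ≤ s) :
    ∃ C : ℝ, 0 < C ∧ ∀ w : SchwartzMap ℝ ℂ,
      |(∫ x : ℝ, deriv (fun y : ℝ => Lop (⇑w) y) x * conj (Ls s (⇑w) x)).re|
        ≤ C * HsSq s (⇑w) := by
  set e : ℝ := (-1:ℝ)^(s+1) with he
  set cs : ℝ := (-1:ℝ)^(s+1) * ((s:ℝ) + 1/2) with hcs
  set γr : ℝ := (-1:ℝ)^(s-1) * ((s:ℝ) - 3/2) with hγr
  set κ : ℝ := -(((s : ℝ) + 3 / 2) / ((s : ℝ) - 3 / 2)) with hκ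
  have hne : (s:ℝ) - 3/2 ≠ 0 := by
    intro h
    have h2 : (s:ℝ) = 3/2 := by linarith
    have h3 : ((2*s : ℕ) : ℝ) = 3 := by push_cast; linarith
    have h4 : (2*s : ℕ) = 3 := by exact_mod_cast h3
    omega
  have hpow : (-1:ℝ)^(s+1) = (-1:ℝ)^(s-1) := by
    rw [show s+1 = (s-1)+2 by omega, pow_add]
    norm_num
  have hzero : e + cs + γr * κ = 0 := by
    have hdiv : ((s:ℝ) - 3/2) * κ = -((s:ℝ) + 3/2) := by
      rw [hκ]
      have h2 : ((s:ℝ)*2 - 3) ≠ 0 := fun h => hne (by linarith)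
      field_simp
    rw [he, hcs, hγr, hpow]
    linear_combination ((-1:ℝ)^(s-1)) * hdiv
  have hpdprP : pd (prP s) = κ • pd pQ := pd_smul κ pQ
  -- the controlled pieces
  have cA2 : Ctrl s (fun w => Bq (pd pQ) 0 (2*s+2) w - e * Bq (pd pQ) (s+1) (s+1) w) := by
    refine Ctrl.congr (fun w => ?_) (ctrl_H1 s (s+1) le_rfl (pd pQ))
    simp only [show s+1-(s+1) = 0 by omega, show s+1+(s+1) = 2*s+2 by omega, he]
  have cA3 : Ctrl s (fun w => Bq pQ 1 (2*s+2) w - cs * Bq (pd pQ) (s+1) (s+1) w) := by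
    refine Ctrl.congr (fun w => ?_) (ctrl_H2 s s (by omega) pQ)
    simp only [show s+1-s = 1 by omega, show s+2+s = 2*s+2 by omega, hcs]
  have cA5 : Ctrl s (fun w => Bq (prP s) 3 (2*s) w - (γr * κ) * Bq (pd pQ) (s+1) (s+1) w) := by
    rcases eq_or_lt_of_le hs with h1 | h2
    · -- s = 1
      have hs1 : s = 1 := h1.symm
      subst hs1
      refine Ctrl.congr (fun w => ?_) Ctrl.zero
      have hsym : Bq (prP 1) 3 2 w = Bq (prP 1) 2 3 w := Bq_symm _ _ _ _
      have hg0 : Bq (prP 1) 2 3 w = -(1/2) * Bq (pd (prP 1)) 2 2 w := Bq_G0 _ _ _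
      rw [show (2*1 : ℕ) = 2 by norm_num, hsym, hg0, hpdprP, Bq_smul]
      rw [hγr]
      norm_num
      ring
    · -- s ≥ 2
      have hs2 : 2 ≤ s := h2
      have hct := ctrl_H2 s (s-2) (by omega) (prP s)
      refine Ctrl.congr (fun w => ?_) hct
      rw [show s+1-(s-2) = 3 by omega, show s+2+(s-2) = 2*s by omega,
        show (s-2)+1 = s-1 by omega, hpdprP, Bq_smul]
      rw [Nat.cast_sub (by omega : 2 ≤ s)]
      rw [hγr]
      push_cast
      ring
  have c6 := ctrl_G1 s (pd pQ * prP s) 0 (2*s) (by omega)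
  have c7 := ctrl_G1 s (pQ * prP s) 1 (2*s) (by omega)
  have c8 := ctrl_G1 s (prP s) 1 (2*s) (by omega)
  have total : Ctrl s (fun w =>
      (∫ x : ℝ, deriv (fun y : ℝ => Lop (⇑w) y) x * conj (Ls s (⇑w) x)).re) := by
    refine Ctrl.congr (fun w => ?_) (((((cA2.neg.sub cA3).sub cA5).sub c6).sub c7).add c8)
    rw [main_split s w]
    have hz1 : Bq 1 3 (2*s+2) w = 0 := by
      have := Bq_one_odd (s-1) 3 w
      rwa [show 3 + (2*(s-1)+1) = 2*s+2 by omega] at this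
    have hz4 : Bq 1 1 (2*s+2) w = 0 := by
      have := Bq_one_odd s 1 w
      rwa [show 1 + (2*s+1) = 2*s+2 by omega] at this
    rw [hz1, hz4]
    linear_combination (-(Bq (pd pQ) (s+1) (s+1) w)) * hzero
  obtain ⟨C, hC⟩ := total
  refine ⟨max C 1, lt_of_lt_of_le one_pos (le_max_right C 1), fun w => ?_⟩
  have hH : 0 ≤ HsSq s (⇑w) := by rw [← HsSq'_eq]; exact HsSq'_nonneg s (⇑w)
  calc |(∫ x : ℝ, deriv (fun y : ℝ => Lop (⇑w) y) x * conj (Ls s (⇑w) x)).re|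
      ≤ C * HsSq' s (⇑w) := hC w
    _ = C * HsSq s (⇑w) := by rw [HsSq'_eq]
    _ ≤ max C 1 * HsSq s (⇑w) := mul_le_mul_of_nonneg_right (le_max_left C 1) hH
end

section
/- Let λ ∈ ℂ with Re λ > 0 and let η ∈ ℝ with η ≠ 0. Then, counting with multiplicity, the polynomial P(μ) = μ⁴ − 4μ² + 4λμ + 3η² has exactly two roots with strictly positive real part and exactly two roots with strictly negative real part. -/
open Polynomial
open scoped Classical

section CharPolyAux

open Complex
open scoped Real

noncomputable def Complex.abs : AbsoluteValue ℂ ℝ := NormedField.toAbsoluteValue ℂ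

lemma Complex.abs_eq_norm_aux (z : ℂ) : Complex.abs z = ‖z‖ := rfl

lemma Complex.abs_mul_exp_arg_mul_I (x : ℂ) :
    ((Complex.abs x : ℝ) : ℂ) * Complex.exp (Complex.arg x * Complex.I) = x :=
  Complex.norm_mul_exp_arg_mul_I x

lemma Complex.abs_ofReal (r : ℝ) : Complex.abs (r : ℂ) = |r| := by
  rw [Complex.abs_eq_norm_aux, Complex.norm_real, Real.norm_eq_abs]

lemma Complex.abs_exp_ofReal_mul_I (x : ℝ) : Complex.abs (Complex.exp (x * Complex.I)) = 1 :=
  Complex.norm_exp_ofReal_mul_I x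

lemma Complex.abs_re_le_abs (z : ℂ) : |z.re| ≤ Complex.abs z := Complex.abs_re_le_norm z

lemma Complex.re_le_abs (z : ℂ) : z.re ≤ Complex.abs z := Complex.re_le_norm z

lemma Complex.abs_im_le_abs (z : ℂ) : |z.im| ≤ Complex.abs z := Complex.abs_im_le_norm z

private lemma ms_polar_aux (s : Multiset ℂ) :
    s.prod = (((s.map Complex.abs).prod : ℝ) : ℂ) *
      Complex.exp (((s.map Complex.arg).sum : ℝ) * Complex.I) := by
  induction s using Multiset.induction_on with
  | empty => simp
  | cons a s ih =>
    simp only [Multiset.map_cons, Multiset.prod_cons, Multiset.sum_cons]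
    rw [ih, Complex.ofReal_mul, Complex.ofReal_add, add_mul, Complex.exp_add]
    conv_lhs => rw [← Complex.abs_mul_exp_arg_mul_I a]
    ring

private lemma ms_abs_sum_le_aux (s : Multiset ℂ) (g : ℂ → ℝ) (b : ℝ)
    (h : ∀ x ∈ s, |g x| ≤ b) : |(s.map g).sum| ≤ s.card * b := by
  induction s using Multiset.induction_on with
  | empty => simp
  | cons a s ih =>
    simp only [Multiset.map_cons, Multiset.sum_cons, Multiset.card_cons]
    have h1 : |g a| ≤ b := h a (Multiset.mem_cons_self a s)
    have h2 : |(s.map g).sum| ≤ s.card * b := ih fun x hx => h x (Multiset.mem_cons_of_mem hx)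
    calc |g a + (s.map g).sum| ≤ |g a| + |(s.map g).sum| := abs_add_le _ _
      _ ≤ b + s.card * b := add_le_add h1 h2
      _ = (s.card + 1) * b := by ring
      _ = ((s.card + 1 : ℕ) : ℝ) * b := by push_cast; ring

private lemma ms_cont_aux (s : Multiset ℂ) (h : ∀ μ ∈ s, μ.re ≠ 0) :
    Continuous (fun t : ℝ => ((s.map (fun μ => Complex.arg ((t : ℂ) + Complex.I * μ))).sum)) := by
  induction s using Multiset.induction_on with
  | empty => simpa using continuous_const
  | cons a s ih =>
    simp only [Multiset.map_cons, Multiset.sum_cons]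
    have ha : a.re ≠ 0 := h a (Multiset.mem_cons_self a s)
    have hinner : Continuous fun t : ℝ => (t : ℂ) + Complex.I * a := by fun_prop
    have h1 : Continuous fun t : ℝ => Complex.arg ((t : ℂ) + Complex.I * a) := by
      rw [continuous_iff_continuousAt]
      intro t
      refine (Complex.continuousAt_arg ?_).comp hinner.continuousAt
      rw [Complex.mem_slitPlane_iff]
      right
      simpa using ha
    exact h1.add (ih fun x hx => h x (Multiset.mem_cons_of_mem hx))

private lemma ms_sign_sum_aux (s : Multiset ℂ) (h : ∀ μ ∈ s, μ.re ≠ 0) :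
    (s.map (fun μ => if 0 < μ.re then (π : ℝ) else -π)).sum
      = π * ((s.filter (fun μ => 0 < μ.re)).card : ℝ)
        - π * ((s.filter (fun μ => μ.re < 0)).card : ℝ) := by
  induction s using Multiset.induction_on with
  | empty => simp
  | cons a s ih =>
    have ha : a.re ≠ 0 := h a (Multiset.mem_cons_self a s)
    have ih' := ih fun x hx => h x (Multiset.mem_cons_of_mem hx)
    simp only [Multiset.map_cons, Multiset.sum_cons, ih']
    by_cases hp : 0 < a.re
    · have hn : ¬ a.re < 0 := by linarith
      simp only [Multiset.filter_cons, if_pos hp, if_neg hn, Multiset.card_add,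
        Multiset.card_singleton, zero_add, Multiset.card_zero]
      push_cast; ring
    · have hn : a.re < 0 := lt_of_le_of_ne (not_lt.mp hp) ha
      simp only [Multiset.filter_cons, if_pos hn, if_neg hp, Multiset.card_add,
        Multiset.card_singleton, zero_add, Multiset.card_zero]
      push_cast; ring

private lemma abs_arcsin_le_pi_div_six_aux {x : ℝ} (h : |x| ≤ 1/2) : |Real.arcsin x| ≤ π/6 := by
  have h6 : Real.arcsin (1/2) = π/6 := by
    rw [← Real.sin_pi_div_six]
    exact Real.arcsin_sin (by linarith [Real.pi_pos]) (by linarith [Real.pi_pos])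
  rw [abs_le] at h ⊢
  constructor
  · have := Real.monotone_arcsin h.1
    rw [show (-(1/2) : ℝ) = -(1/2) from rfl, Real.arcsin_neg, h6] at this
    linarith
  · have := Real.monotone_arcsin h.2
    rw [h6] at this
    linarith

end CharPolyAux

set_option maxHeartbeats 1000000 in
open Complex in
open scoped Real in
/-- For `Re λ > 0` and real `η ≠ 0`, the polynomial `P(μ) = μ⁴ − 4μ² + 4λμ + 3η²`
has (counting multiplicity) exactly two roots with positive real part and exactly two
roots with negative real part. -/
theorem char_poly_root_count (lam : ℂ) (hlam : 0 < lam.re) (η : ℝ) (hη : η ≠ 0) :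
    (((X ^ 4 - C 4 * X ^ 2 + C (4 * lam) * X + C (3 * (η : ℂ) ^ 2) : Polynomial ℂ).roots.filter
        fun μ => 0 < μ.re).card = 2) ∧
    (((X ^ 4 - C 4 * X ^ 2 + C (4 * lam) * X + C (3 * (η : ℂ) ^ 2) : Polynomial ℂ).roots.filter
        fun μ => μ.re < 0).card = 2) := by
  set P : Polynomial ℂ := X ^ 4 - C 4 * X ^ 2 + C (4 * lam) * X + C (3 * (η : ℂ) ^ 2) with hP
  -- basic polynomial facts
  have hmonic : P.Monic := by rw [hP]; monicity!
  have hdeg : P.natDegree = 4 := by rw [hP]; compute_degree!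
  have hP0 : P ≠ 0 := hmonic.ne_zero
  have hsplit : Splits P := IsAlgClosed.splits P
  have hcard : Multiset.card P.roots = 4 := by
    rw [splits_iff_card_roots.mp hsplit, hdeg]
  have heval : ∀ z : ℂ, eval z P = z^4 - 4*z^2 + 4*lam*z + 3*(η:ℂ)^2 := by
    intro z; simp [hP]
  have him : ∀ t : ℝ, (eval ((t:ℂ)*I) P).im = 4*t*lam.re := by
    intro t
    rw [heval]
    simp [Complex.add_im, Complex.sub_im, Complex.mul_im, Complex.mul_re, pow_succ]
    ring
  have heval0 : eval 0 P = ((3*η^2 : ℝ) : ℂ) := by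
    rw [heval]; push_cast; ring
  -- no purely imaginary roots
  have hre : ∀ μ ∈ P.roots, μ.re ≠ 0 := by
    intro μ hμ hre0
    have hroot : eval μ P = 0 := (Polynomial.mem_roots hP0).mp hμ
    have hμI : μ = ((μ.im : ℝ):ℂ) * I := by
      apply Complex.ext <;> simp [hre0]
    rw [hμI] at hroot
    have h1 : (eval ((μ.im:ℂ)*I) P).im = 0 := by rw [hroot]; simp
    rw [him μ.im] at h1
    have h2 : μ.im = 0 := by
      rcases mul_eq_zero.mp h1 with h | h
      · rcases mul_eq_zero.mp h with h' | h'
        · norm_num at h'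
        · exact h'
      · exact absurd h (ne_of_gt hlam)
    rw [h2] at hroot
    simp only [Complex.ofReal_zero, zero_mul] at hroot
    rw [heval0] at hroot
    have h5 : (3*η^2 : ℝ) = 0 := by exact_mod_cast hroot
    have h6 : (0:ℝ) < 3*η^2 := by positivity
    linarith
  -- bound on the roots
  set M : ℝ := 5 + 4*Complex.abs lam + 3*η^2 with hM
  have hM5 : 5 ≤ M := by nlinarith [AbsoluteValue.nonneg Complex.abs lam, sq_nonneg η]
  have hMpos : 0 < M := by linarith
  have hbound : ∀ μ ∈ P.roots, Complex.abs μ < M := by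
    intro μ hμ
    have hroot : eval μ P = 0 := (Polynomial.mem_roots hP0).mp hμ
    rw [heval] at hroot
    have heq : μ^4 = 4*μ^2 - 4*lam*μ - 3*(η:ℂ)^2 := by
      rw [← sub_eq_zero]; rw [← hroot]; ring
    set x : ℝ := Complex.abs μ with hx
    have habs : x^4 ≤ 4*x^2 + 4*(Complex.abs lam)*x + 3*η^2 := by
      have h1 : Complex.abs (μ^4) ≤ Complex.abs (4*μ^2) + Complex.abs (4*lam*μ)
          + Complex.abs (3*(η:ℂ)^2) := by
        rw [heq]
        calc Complex.abs (4*μ^2 - 4*lam*μ - 3*(η:ℂ)^2)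
            ≤ Complex.abs (4*μ^2 - 4*lam*μ) + Complex.abs (3*(η:ℂ)^2) := by
              apply AbsoluteValue.sub_le_add
          _ ≤ Complex.abs (4*μ^2) + Complex.abs (4*lam*μ) + Complex.abs (3*(η:ℂ)^2) := by
              gcongr
              apply AbsoluteValue.sub_le_add
      simp only [map_mul, map_pow] at h1
      have h4 : Complex.abs 4 = 4 := by
        rw [show (4:ℂ) = ((4:ℝ):ℂ) by norm_num, Complex.abs_ofReal]; norm_num
      have h3 : Complex.abs 3 = 3 := by
        rw [show (3:ℂ) = ((3:ℝ):ℂ) by norm_num, Complex.abs_ofReal]; norm_num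
      have hη2 : Complex.abs ((η:ℂ)) = |η| := Complex.abs_ofReal η
      rw [h4, h3, hη2] at h1
      calc x^4 ≤ 4*x^2 + 4*(Complex.abs lam)*x + 3*|η|^2 := by exact_mod_cast h1
        _ = 4*x^2 + 4*(Complex.abs lam)*x + 3*η^2 := by rw [_root_.sq_abs]
    by_contra hcon
    push_neg at hcon
    have hx0 : 0 ≤ x := AbsoluteValue.nonneg _ _
    have h1 : 1 ≤ x := by linarith
    have ha : 0 ≤ Complex.abs lam := AbsoluteValue.nonneg _ _
    have hx2 : M^2 ≤ x^2 := by nlinarith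
    have hA : M^2 * x^2 ≤ x^4 := by nlinarith
    have hxx : x ≤ x^2 := by nlinarith
    have hB : 4*(Complex.abs lam)*x ≤ 4*(Complex.abs lam)*x^2 :=
      mul_le_mul_of_nonneg_left hxx (by positivity)
    have hC : 3*η^2 ≤ 3*η^2*x^2 := by
      nlinarith [mul_le_mul_of_nonneg_left (show (1:ℝ) ≤ x^2 by nlinarith)
        (show (0:ℝ) ≤ 3*η^2 by positivity)]
    have hE : (M-1)*x^2 = 4*x^2 + 4*Complex.abs lam*x^2 + 3*η^2*x^2 := by rw [hM]; ring
    have hD : x^4 ≤ (M-1)*x^2 := by linarith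
    nlinarith [sq_nonneg (M-1)]
  -- factorization and the product formula on the imaginary axis
  have hfact : P = (P.roots.map fun a => X - C a).prod :=
    (hsplit.eq_prod_roots_of_monic hmonic)
  have hprod : ∀ t : ℝ, eval ((t:ℂ)*I) P = (P.roots.map fun a => (t:ℂ) + I*a).prod := by
    intro t
    conv_lhs => rw [hfact]
    rw [eval_multiset_prod, Multiset.map_map]
    have h1 : ((fun z => eval ((t:ℂ)*I) z) ∘ fun a => X - C a) = fun a : ℂ => I * ((t:ℂ) + I*a) := by
      funext a
      simp only [Function.comp_apply, eval_sub, eval_X, eval_C]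
      have : I * ((t:ℂ) + I*a) = (t:ℂ)*I + I^2*a := by ring
      rw [this, Complex.I_sq]; ring
    rw [h1]
    have h2 : (Multiset.map (fun a : ℂ => I * ((t:ℂ) + I*a)) P.roots).prod
        = (Multiset.map (fun _ : ℂ => I) P.roots).prod
          * (Multiset.map (fun a : ℂ => (t:ℂ) + I*a) P.roots).prod :=
      Multiset.prod_map_mul
    rw [h2, Multiset.map_const', Multiset.prod_replicate, hcard]
    simp [pow_succ, Complex.I_sq]
  -- the winding function and modulus
  set f : ℝ → ℝ := fun t => ((P.roots.map (fun μ => Complex.arg ((t:ℂ) + I*μ))).sum) with hf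
  set R : ℝ → ℝ := fun t => ((P.roots.map (fun μ => Complex.abs ((t:ℂ) + I*μ))).prod) with hRdef
  have hW : ∀ t : ℝ, eval ((t:ℂ)*I) P = ((R t : ℝ) : ℂ) * Complex.exp ((f t : ℝ) * I) := by
    intro t
    rw [hprod t, ms_polar_aux, Multiset.map_map, Multiset.map_map]
    rfl
  have hRpos : ∀ t : ℝ, 0 < R t := by
    intro t
    apply Multiset.prod_pos
    intro x hx
    rw [Multiset.mem_map] at hx
    obtain ⟨μ, hμ, rfl⟩ := hx
    refine AbsoluteValue.pos _ ?_
    intro hzero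
    apply hre μ hμ
    have := congrArg Complex.im hzero
    simpa using this
  have hsin : ∀ t : ℝ, R t * Real.sin (f t) = 4*t*lam.re := by
    intro t
    rw [← him t, hW t]
    simp [Complex.mul_im, Complex.exp_ofReal_mul_I_re, Complex.exp_ofReal_mul_I_im]
  have hsinpos : ∀ t : ℝ, 0 < t → 0 < Real.sin (f t) := by
    intro t ht
    have h := hsin t
    have hR := hRpos t
    nlinarith
  have hsinneg : ∀ t : ℝ, t < 0 → Real.sin (f t) < 0 := by
    intro t ht
    have h := hsin t
    have hR := hRpos t
    nlinarith
  have hcos1 : Real.cos (f 0) = 1 := by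
    have h2 : ((0:ℝ):ℂ)*I = 0 := by simp
    have h1 := hW 0
    rw [h2, heval0] at h1
    have hRabs : R 0 = 3*η^2 := by
      have h3 : Complex.abs (((3*η^2:ℝ)):ℂ) = R 0 := by
        rw [h1, map_mul, Complex.abs_ofReal, Complex.abs_exp_ofReal_mul_I, mul_one]
        rw [abs_of_pos (hRpos 0)]
      rw [Complex.abs_ofReal, abs_of_pos (by positivity)] at h3
      exact h3.symm
    rw [hRabs] at h1
    have hne : ((3*η^2:ℝ):ℂ) ≠ 0 := by
      simp only [ne_eq, Complex.ofReal_eq_zero]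
      positivity
    have h4 : ((3*η^2:ℝ):ℂ) * 1 = ((3*η^2:ℝ):ℂ) * Complex.exp ((f 0 : ℝ) * I) := by
      rw [mul_one]
      exact_mod_cast h1
    have hexp := (mul_left_cancel₀ hne h4).symm
    rw [← Complex.exp_ofReal_mul_I_re, hexp, Complex.one_re]
  obtain ⟨k, hk⟩ := (Real.cos_eq_one_iff (f 0)).mp hcos1
  set c : ℝ := f 0 with hc
  have hcont : Continuous f := ms_cont_aux P.roots hre
  -- sine sign facts around c
  have hsc : Real.sin c = 0 := by
    rw [← hk]
    have : (k:ℝ) * (2*π) = (2*k : ℤ) * π := by push_cast; ring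
    rw [this, Real.sin_int_mul_pi]
  have hsc1 : Real.sin (c + π) = 0 := by
    rw [← hk]
    have : (k:ℝ) * (2*π) + π = ((2*k+1 : ℤ)) * π := by push_cast; ring
    rw [this, Real.sin_int_mul_pi]
  have hsc2 : Real.sin (c - π) = 0 := by
    rw [← hk]
    have : (k:ℝ) * (2*π) - π = ((2*k-1 : ℤ)) * π := by push_cast; ring
    rw [this, Real.sin_int_mul_pi]
  have hsneg : ∀ x : ℝ, c - π < x → x < c → Real.sin x < 0 := by
    intro x h1 h2
    have hper : Real.sin x = Real.sin (x - k * (2*π)) := (Real.sin_sub_int_mul_two_pi x k).symm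
    rw [hper]
    apply Real.sin_neg_of_neg_of_neg_pi_lt <;> rw [← hk] at h1 h2 <;> linarith
  have hspos : ∀ x : ℝ, c < x → x < c + π → 0 < Real.sin x := by
    intro x h1 h2
    have hper : Real.sin x = Real.sin (x - k * (2*π)) := (Real.sin_sub_int_mul_two_pi x k).symm
    rw [hper]
    apply Real.sin_pos_of_pos_of_lt_pi <;> rw [← hk] at h1 h2 <;> linarith
  -- intermediate value claims
  have claimA : ∀ t : ℝ, 0 < t → f t ∈ Set.Ioo c (c + π) := by
    intro t ht
    have hconton : ContinuousOn f (Set.Icc 0 t) := hcont.continuousOn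
    have hnetop : f t ≠ c + π := fun h => by
      have := hsinpos t ht; rw [h, hsc1] at this; exact lt_irrefl 0 this
    have hnebot : f t ≠ c := fun h => by
      have := hsinpos t ht; rw [h, hsc] at this; exact lt_irrefl 0 this
    have hnebot2 : f t ≠ c - π := fun h => by
      have := hsinpos t ht; rw [h, hsc2] at this; exact lt_irrefl 0 this
    constructor
    · by_contra h'
      push_neg at h'
      have hlt : f t < c := lt_of_le_of_ne h' hnebot
      rcases lt_or_ge (c - π) (f t) with h1 | h1
      · exact absurd (hsinpos t ht) (not_lt.mpr (le_of_lt (hsneg _ h1 hlt)))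
      · have hlt2 : f t < c - π := lt_of_le_of_ne h1 hnebot2
        have hmem : c - π ∈ Set.Ioo (f t) (f 0) := ⟨hlt2, by rw [← hc]; linarith [Real.pi_pos]⟩
        obtain ⟨s, hs, hfs⟩ := intermediate_value_Ioo' (le_of_lt ht) hconton hmem
        have := hsinpos s hs.1
        rw [hfs, hsc2] at this
        exact lt_irrefl 0 this
    · by_contra h'
      push_neg at h'
      have hlt : c + π < f t := lt_of_le_of_ne h' (Ne.symm hnetop)
      have hmem : c + π ∈ Set.Ioo (f 0) (f t) := ⟨by rw [← hc]; linarith [Real.pi_pos], hlt⟩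
      obtain ⟨s, hs, hfs⟩ := intermediate_value_Ioo (le_of_lt ht) hconton hmem
      have := hsinpos s hs.1
      rw [hfs, hsc1] at this
      exact lt_irrefl 0 this
  have claimB : ∀ t : ℝ, t < 0 → f t ∈ Set.Ioo (c - π) c := by
    intro t ht
    have hconton : ContinuousOn f (Set.Icc t 0) := hcont.continuousOn
    have hnetop : f t ≠ c := fun h => by
      have := hsinneg t ht; rw [h, hsc] at this; exact lt_irrefl 0 this
    have hnebot : f t ≠ c - π := fun h => by
      have := hsinneg t ht; rw [h, hsc2] at this; exact lt_irrefl 0 this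
    have hnetop2 : f t ≠ c + π := fun h => by
      have := hsinneg t ht; rw [h, hsc1] at this; exact lt_irrefl 0 this
    constructor
    · by_contra h'
      push_neg at h'
      have hlt : f t < c - π := lt_of_le_of_ne h' hnebot
      have hmem : c - π ∈ Set.Ioo (f t) (f 0) := ⟨hlt, by rw [← hc]; linarith [Real.pi_pos]⟩
      obtain ⟨s, hs, hfs⟩ := intermediate_value_Ioo (le_of_lt ht) hconton hmem
      have := hsinneg s hs.2
      rw [hfs, hsc2] at this
      exact lt_irrefl 0 this
    · by_contra h'
      push_neg at h'
      have hlt : c < f t := lt_of_le_of_ne h' (Ne.symm hnetop)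
      rcases lt_or_ge (f t) (c + π) with h1 | h1
      · exact absurd (hsinneg t ht) (not_lt.mpr (le_of_lt (hspos _ hlt h1)))
      · have hlt2 : c + π < f t := lt_of_le_of_ne h1 (Ne.symm hnetop2)
        have hmem : c + π ∈ Set.Ioo (f 0) (f t) := ⟨by rw [← hc]; linarith [Real.pi_pos], hlt2⟩
        obtain ⟨s, hs, hfs⟩ := intermediate_value_Ioo' (le_of_lt ht) hconton hmem
        have := hsinneg s hs.2
        rw [hfs, hsc1] at this
        exact lt_irrefl 0 this
  -- arg bounds at t = 3M
  have hargT : ∀ μ ∈ P.roots, |Complex.arg (((3*M : ℝ):ℂ) + I*μ)| ≤ π/6 := by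
    intro μ hμ
    have hb := hbound μ hμ
    have him' : |μ.im| ≤ M := le_of_lt (lt_of_le_of_lt (Complex.abs_im_le_abs μ) hb)
    set z : ℂ := ((3*M : ℝ):ℂ) + I*μ with hz
    have hzre : z.re = 3*M - μ.im := by simp [hz]; ring
    have hzim : z.im = μ.re := by simp [hz]
    have hrepos : 2*M ≤ z.re := by rw [hzre]; cases abs_le.mp him'; linarith
    have habsz : 2*M ≤ Complex.abs z := le_trans hrepos (Complex.re_le_abs z)
    have harg : Complex.arg z = Real.arcsin (z.im / Complex.abs z) :=
      Complex.arg_of_re_nonneg (by linarith)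
    rw [harg]
    apply abs_arcsin_le_pi_div_six_aux
    rw [abs_div, abs_of_pos (by linarith : (0:ℝ) < Complex.abs z)]
    rw [div_le_iff₀ (by linarith)]
    rw [hzim]
    have hre' : |μ.re| ≤ M := le_of_lt (lt_of_le_of_lt (Complex.abs_re_le_abs μ) hb)
    linarith
  -- arg bounds at t = -3M
  have hargT' : ∀ μ ∈ P.roots, |Complex.arg (((-(3*M) : ℝ):ℂ) + I*μ)
      - (if 0 < μ.re then (π:ℝ) else -π)| ≤ π/6 := by
    intro μ hμ
    have hb := hbound μ hμ
    have hμre := hre μ hμ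
    have him' : |μ.im| ≤ M := le_of_lt (lt_of_le_of_lt (Complex.abs_im_le_abs μ) hb)
    have hre' : |μ.re| ≤ M := le_of_lt (lt_of_le_of_lt (Complex.abs_re_le_abs μ) hb)
    set z : ℂ := ((-(3*M) : ℝ):ℂ) + I*μ with hz
    have hzre : z.re = -(3*M) - μ.im := by simp [hz]; ring
    have hzim : z.im = μ.re := by simp [hz]
    have hreneg : z.re ≤ -(2*M) := by rw [hzre]; cases abs_le.mp him'; linarith
    have hreneg' : z.re < 0 := by linarith
    have habsz : 2*M ≤ Complex.abs z := by
      have h1 : |z.re| ≤ Complex.abs z := Complex.abs_re_le_abs z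
      rw [abs_of_neg hreneg'] at h1
      linarith
    have hquot : |(-z).im / Complex.abs z| ≤ 1/2 := by
      rw [abs_div, abs_of_pos (by linarith : (0:ℝ) < Complex.abs z)]
      rw [div_le_iff₀ (by linarith)]
      have hnegim : (-z).im = -μ.re := by rw [Complex.neg_im, hzim]
      rw [hnegim, abs_neg]
      linarith
    rcases lt_or_gt_of_ne hμre with hneg | hpos
    · rw [if_neg (by linarith)]
      have harg : Complex.arg z = Real.arcsin ((-z).im / Complex.abs z) - π :=
        Complex.arg_of_re_neg_of_im_neg hreneg' (by rw [hzim]; exact hneg)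
      rw [harg]
      have heq' : Real.arcsin ((-z).im / Complex.abs z) - π - -π
          = Real.arcsin ((-z).im / Complex.abs z) := by ring
      rw [heq']
      exact abs_arcsin_le_pi_div_six_aux hquot
    · rw [if_pos hpos]
      have harg : Complex.arg z = Real.arcsin ((-z).im / Complex.abs z) + π :=
        Complex.arg_of_re_neg_of_im_nonneg hreneg' (by rw [hzim]; exact le_of_lt hpos)
      rw [harg]
      have heq' : Real.arcsin ((-z).im / Complex.abs z) + π - π
          = Real.arcsin ((-z).im / Complex.abs z) := by ring
      rw [heq']
      exact abs_arcsin_le_pi_div_six_aux hquot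
  -- conclude c = 0 i.e. k = 0
  have hfT : |f (3*M)| ≤ 4*(π/6) := by
    have := ms_abs_sum_le_aux P.roots (fun μ => Complex.arg (((3*M : ℝ):ℂ) + I*μ)) (π/6) hargT
    rw [hcard] at this
    calc |f (3*M)| = |(P.roots.map (fun μ => Complex.arg (((3*M : ℝ):ℂ) + I*μ))).sum| := by
          rw [hf]
      _ ≤ (4:ℕ) * (π/6) := this
      _ = 4*(π/6) := by norm_num
  have hk0 : k = 0 := by
    have hA := claimA (3*M) (by linarith)
    obtain ⟨hA1, hA2⟩ := hA
    rw [abs_le] at hfT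
    have hpi := Real.pi_pos
    have h1 : (k:ℝ)*(2*π) < 4*(π/6) := by rw [hk]; linarith
    have h2 : -(4*(π/6)) - π < (k:ℝ)*(2*π) := by rw [hk]; linarith
    have h3 : (k:ℝ) < 1 := by nlinarith
    have h4 : (-1 : ℝ) < (k:ℝ) := by nlinarith
    have h3' : k < 1 := by exact_mod_cast h3
    have h4' : -1 < k := by exact_mod_cast h4
    omega
  have hc0 : c = 0 := by rw [← hk, hk0]; norm_num
  -- the counting at t = -3M
  set a : ℕ := (P.roots.filter (fun μ => 0 < μ.re)).card with ha
  set b : ℕ := (P.roots.filter (fun μ => μ.re < 0)).card with hb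
  have hab : a + b = 4 := by
    have h1 : P.roots.filter (fun μ => ¬ 0 < μ.re) = P.roots.filter (fun μ => μ.re < 0) := by
      apply Multiset.filter_congr
      intro x hx
      constructor
      · intro h; exact lt_of_le_of_ne (not_lt.mp h) (hre x hx)
      · intro h; exact not_lt.mpr (le_of_lt h)
    have h2 := Multiset.filter_add_not (fun μ => 0 < μ.re) P.roots
    have h3 := congrArg Multiset.card h2
    rw [Multiset.card_add, h1] at h3
    rw [ha, hb, h3, hcard]
  have hsum_sign : (P.roots.map (fun μ => if 0 < μ.re then (π : ℝ) else -π)).sum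
      = π * (a:ℝ) - π * (b:ℝ) := ms_sign_sum_aux P.roots hre
  have hfnT : |f (-(3*M)) - (π * (a:ℝ) - π * (b:ℝ))| ≤ 4*(π/6) := by
    have hsub : (P.roots.map (fun μ => Complex.arg (((-(3*M) : ℝ):ℂ) + I*μ)
        - (if 0 < μ.re then (π:ℝ) else -π))).sum
        = f (-(3*M)) - (π * (a:ℝ) - π * (b:ℝ)) := by
      rw [Multiset.sum_map_sub, hsum_sign, hf]
    have := ms_abs_sum_le_aux P.roots (fun μ => Complex.arg (((-(3*M) : ℝ):ℂ) + I*μ)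
        - (if 0 < μ.re then (π:ℝ) else -π)) (π/6) hargT'
    rw [hcard, hsub] at this
    calc |f (-(3*M)) - (π * (a:ℝ) - π * (b:ℝ))| ≤ (4:ℕ) * (π/6) := this
      _ = 4*(π/6) := by norm_num
  have hB := claimB (-(3*M)) (by linarith)
  rw [hc0] at hB
  obtain ⟨hB1, hB2⟩ := hB
  rw [abs_le] at hfnT
  have hpi := Real.pi_pos
  -- π(a-b) ∈ (-5π/3, 2π/3), so a - b ∈ {-1, 0}; parity forces a = b = 2
  have h1 : π * (a:ℝ) - π * (b:ℝ) < 2*π/3 := by linarith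
  have h2 : -(5*π/3) < π * (a:ℝ) - π * (b:ℝ) := by linarith
  have hbr : (b:ℝ) = 4 - (a:ℝ) := by
    have : (a:ℝ) + (b:ℝ) = 4 := by exact_mod_cast hab
    linarith
  rw [hbr] at h1 h2
  have ha2 : (a:ℝ) < 3 := by nlinarith
  have ha1 : (1:ℝ) < (a:ℝ) := by nlinarith
  have ha2' : a < 3 := by exact_mod_cast ha2
  have ha1' : 1 < a := by exact_mod_cast ha1
  have haeq : a = 2 := by omega
  have hbeq : b = 2 := by omega
  exact ⟨haeq, hbeq⟩
end

section
/- Let λ, η ∈ ℂ and let μ ∈ ℂ be a root of P(μ) = μ⁴ − 4μ² + 4λμ + 3η². Then the function g(z) = e^{μz} ( μ³ + 2μ + λ − 3μ² tanh z ) satisfies the fourth-order ODE g'''' + 4Φ g'' + 4λ g' − 4 g'' + 3η² g = 0 on ℝ, where Φ(z) = 3 sech² z. -/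
private lemma tanh_hasDerivAt (z : ℝ) :
    HasDerivAt (fun z' : ℝ => ((Real.tanh z' : ℝ) : ℂ)) (1 - (Real.tanh z : ℂ) ^ 2) z := by
  have hc : Real.cosh z ≠ 0 := (Real.cosh_pos z).ne'
  have h : HasDerivAt Real.tanh (1 - Real.tanh z ^ 2) z := by
    have h1 := Real.hasDerivAt_sinh z
    have h2 := Real.hasDerivAt_cosh z
    have h3 := h1.div h2 hc
    have he : (fun x => Real.sinh x / Real.cosh x) = Real.tanh := by
      funext x; rw [Real.tanh_eq_sinh_div_cosh]
    rw [show (Real.sinh / Real.cosh) = Real.tanh from he] at h3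
    refine h3.congr_deriv ?_
    rw [Real.tanh_eq_sinh_div_cosh]
    field_simp
  have h4 := h.ofReal_comp
  convert h4 using 1
  push_cast
  ring

private lemma expPoly_hasDerivAt (μ c0 c1 c2 c3 c4 c5 : ℂ) (z : ℝ) :
    HasDerivAt
      (fun z' : ℝ => Complex.exp (μ * z') *
        (c0 + c1 * (Real.tanh z' : ℂ) + c2 * (Real.tanh z' : ℂ) ^ 2 + c3 * (Real.tanh z' : ℂ) ^ 3
          + c4 * (Real.tanh z' : ℂ) ^ 4 + c5 * (Real.tanh z' : ℂ) ^ 5))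
      (Complex.exp (μ * z) *
        (μ * (c0 + c1 * (Real.tanh z : ℂ) + c2 * (Real.tanh z : ℂ) ^ 2 + c3 * (Real.tanh z : ℂ) ^ 3
            + c4 * (Real.tanh z : ℂ) ^ 4 + c5 * (Real.tanh z : ℂ) ^ 5)
          + (c1 + 2 * c2 * (Real.tanh z : ℂ) + 3 * c3 * (Real.tanh z : ℂ) ^ 2
              + 4 * c4 * (Real.tanh z : ℂ) ^ 3 + 5 * c5 * (Real.tanh z : ℂ) ^ 4)
            * (1 - (Real.tanh z : ℂ) ^ 2))) z := by
  have hE : HasDerivAt (fun z' : ℝ => Complex.exp (μ * z')) (Complex.exp (μ * z) * μ) z := by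
    have h1 : HasDerivAt (fun z' : ℝ => μ * (z' : ℂ)) μ z := by
      simpa using (hasDerivAt_id z).ofReal_comp.const_mul μ
    exact h1.cexp
  have hT := tanh_hasDerivAt z
  have hT2 : HasDerivAt (fun z' : ℝ => (Real.tanh z' : ℂ) ^ 2)
      (((2 : ℕ) : ℂ) * (Real.tanh z : ℂ) ^ (2 - 1) * (1 - (Real.tanh z : ℂ) ^ 2)) z :=
      hT.fun_pow 2
  have hT3 : HasDerivAt (fun z' : ℝ => (Real.tanh z' : ℂ) ^ 3)
      (((3 : ℕ) : ℂ) * (Real.tanh z : ℂ) ^ (3 - 1) * (1 - (Real.tanh z : ℂ) ^ 2)) z :=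
      hT.fun_pow 3
  have hT4 : HasDerivAt (fun z' : ℝ => (Real.tanh z' : ℂ) ^ 4)
      (((4 : ℕ) : ℂ) * (Real.tanh z : ℂ) ^ (4 - 1) * (1 - (Real.tanh z : ℂ) ^ 2)) z :=
      hT.fun_pow 4
  have hT5 : HasDerivAt (fun z' : ℝ => (Real.tanh z' : ℂ) ^ 5)
      (((5 : ℕ) : ℂ) * (Real.tanh z : ℂ) ^ (5 - 1) * (1 - (Real.tanh z : ℂ) ^ 2)) z :=
      hT.fun_pow 5
  have hP := (((((hasDerivAt_const z c0).add (hT.const_mul c1)).add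
      (hT2.const_mul c2)).add (hT3.const_mul c3)).add
      (hT4.const_mul c4)).add (hT5.const_mul c5)
  have := hE.mul hP
  refine this.congr_deriv ?_
  simp only [Pi.add_apply]
  push_cast
  ring

/-- If `μ` is a root of `P(μ) = μ⁴ − 4μ² + 4λμ + 3η²`, then
`g(z) = e^{μz}(μ³ + 2μ + λ − 3μ² tanh z)` solves
`g'''' + 4Φ g'' + 4λ g' − 4g'' + 3η² g = 0` with `Φ(z) = 3 sech² z`. -/
theorem explicit_solution_of_eigenmode_ODE (lam η μ : ℂ)
    (hroot : μ ^ 4 - 4 * μ ^ 2 + 4 * lam * μ + 3 * η ^ 2 = 0) :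
    ∀ z : ℝ,
      iteratedDeriv 4
          (fun z' : ℝ => Complex.exp (μ * z') * (μ ^ 3 + 2 * μ + lam - 3 * μ ^ 2 * Real.tanh z')) z
        + 4 * (3 * (1 / Real.cosh z) ^ 2 : ℝ) *
            iteratedDeriv 2
              (fun z' : ℝ => Complex.exp (μ * z') * (μ ^ 3 + 2 * μ + lam - 3 * μ ^ 2 * Real.tanh z')) z
        + 4 * lam *
            deriv
              (fun z' : ℝ => Complex.exp (μ * z') * (μ ^ 3 + 2 * μ + lam - 3 * μ ^ 2 * Real.tanh z')) z
        - 4 * iteratedDeriv 2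
              (fun z' : ℝ => Complex.exp (μ * z') * (μ ^ 3 + 2 * μ + lam - 3 * μ ^ 2 * Real.tanh z')) z
        + 3 * η ^ 2 * (Complex.exp (μ * z) * (μ ^ 3 + 2 * μ + lam - 3 * μ ^ 2 * Real.tanh z)) = 0 := by
  set a : ℂ := μ ^ 3 + 2 * μ + lam with ha
  set F : ℂ → ℂ → ℂ → ℂ → ℂ → ℂ → ℝ → ℂ := fun c0 c1 c2 c3 c4 c5 z =>
    Complex.exp (μ * z) *
      (c0 + c1 * (Real.tanh z : ℂ) + c2 * (Real.tanh z : ℂ) ^ 2 + c3 * (Real.tanh z : ℂ) ^ 3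
        + c4 * (Real.tanh z : ℂ) ^ 4 + c5 * (Real.tanh z : ℂ) ^ 5) with hF
  have step : ∀ c0 c1 c2 c3 c4 c5 d0 d1 d2 d3 d4 d5 : ℂ,
      (∀ t : ℂ, μ * (c0 + c1 * t + c2 * t ^ 2 + c3 * t ^ 3 + c4 * t ^ 4 + c5 * t ^ 5)
          + (c1 + 2 * c2 * t + 3 * c3 * t ^ 2 + 4 * c4 * t ^ 3 + 5 * c5 * t ^ 4) * (1 - t ^ 2)
        = d0 + d1 * t + d2 * t ^ 2 + d3 * t ^ 3 + d4 * t ^ 4 + d5 * t ^ 5) →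
      deriv (F c0 c1 c2 c3 c4 c5) = F d0 d1 d2 d3 d4 d5 := by
    intro c0 c1 c2 c3 c4 c5 d0 d1 d2 d3 d4 d5 h
    funext z
    rw [hF]
    rw [(expPoly_hasDerivAt μ c0 c1 c2 c3 c4 c5 z).deriv, h ((Real.tanh z : ℂ))]
  have h0 : (fun z' : ℝ =>
      Complex.exp (μ * z') * (μ ^ 3 + 2 * μ + lam - 3 * μ ^ 2 * Real.tanh z'))
      = F a (-3 * μ ^ 2) 0 0 0 0 := by
    funext z; rw [hF]; ring
  have h1 : deriv (F a (-3 * μ ^ 2) 0 0 0 0)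
      = F (μ * a - 3 * μ ^ 2) (-3 * μ ^ 3) (3 * μ ^ 2) 0 0 0 :=
    step _ _ _ _ _ _ _ _ _ _ _ _ (fun t => by ring)
  have h2 : deriv (F (μ * a - 3 * μ ^ 2) (-3 * μ ^ 3) (3 * μ ^ 2) 0 0 0)
      = F (μ ^ 2 * a - 6 * μ ^ 3) (6 * μ ^ 2 - 3 * μ ^ 4) (6 * μ ^ 3) (-6 * μ ^ 2) 0 0 :=
    step _ _ _ _ _ _ _ _ _ _ _ _ (fun t => by ring)
  have h3 : deriv (F (μ ^ 2 * a - 6 * μ ^ 3) (6 * μ ^ 2 - 3 * μ ^ 4) (6 * μ ^ 3) (-6 * μ ^ 2) 0 0)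
      = F (μ ^ 3 * a + 6 * μ ^ 2 - 9 * μ ^ 4) (18 * μ ^ 3 - 3 * μ ^ 5) (9 * μ ^ 4 - 24 * μ ^ 2)
          (-18 * μ ^ 3) (18 * μ ^ 2) 0 :=
    step _ _ _ _ _ _ _ _ _ _ _ _ (fun t => by ring)
  have h4 : deriv (F (μ ^ 3 * a + 6 * μ ^ 2 - 9 * μ ^ 4) (18 * μ ^ 3 - 3 * μ ^ 5)
        (9 * μ ^ 4 - 24 * μ ^ 2) (-18 * μ ^ 3) (18 * μ ^ 2) 0)
      = F (μ ^ 4 * a + 24 * μ ^ 3 - 12 * μ ^ 5) (36 * μ ^ 4 - 3 * μ ^ 6 - 48 * μ ^ 2)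
          (12 * μ ^ 5 - 96 * μ ^ 3) (-36 * μ ^ 4 + 120 * μ ^ 2) (72 * μ ^ 3) (-72 * μ ^ 2) :=
    step _ _ _ _ _ _ _ _ _ _ _ _ (fun t => by ring)
  intro z
  have hsech : ((3 * (1 / Real.cosh z) ^ 2 : ℝ) : ℂ) = 3 * (1 - (Real.tanh z : ℂ) ^ 2) := by
    have hc : Real.cosh z ≠ 0 := (Real.cosh_pos z).ne'
    have hs := Real.sinh_sq z
    have hr : (3 * (1 / Real.cosh z) ^ 2 : ℝ) = 3 * (1 - Real.tanh z ^ 2) := by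
      rw [Real.tanh_eq_sinh_div_cosh]
      field_simp
      linarith
    rw [hr]; push_cast; ring
  have e1 : deriv (fun z' : ℝ =>
      Complex.exp (μ * z') * (μ ^ 3 + 2 * μ + lam - 3 * μ ^ 2 * Real.tanh z'))
      = F (μ * a - 3 * μ ^ 2) (-3 * μ ^ 3) (3 * μ ^ 2) 0 0 0 := by rw [h0, h1]
  have e2 : iteratedDeriv 2 (fun z' : ℝ =>
      Complex.exp (μ * z') * (μ ^ 3 + 2 * μ + lam - 3 * μ ^ 2 * Real.tanh z'))
      = F (μ ^ 2 * a - 6 * μ ^ 3) (6 * μ ^ 2 - 3 * μ ^ 4) (6 * μ ^ 3) (-6 * μ ^ 2) 0 0 := by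
    rw [iteratedDeriv_succ (n := 1), iteratedDeriv_one, e1, h2]
  have e4 : iteratedDeriv 4 (fun z' : ℝ =>
      Complex.exp (μ * z') * (μ ^ 3 + 2 * μ + lam - 3 * μ ^ 2 * Real.tanh z'))
      = F (μ ^ 4 * a + 24 * μ ^ 3 - 12 * μ ^ 5) (36 * μ ^ 4 - 3 * μ ^ 6 - 48 * μ ^ 2)
          (12 * μ ^ 5 - 96 * μ ^ 3) (-36 * μ ^ 4 + 120 * μ ^ 2) (72 * μ ^ 3) (-72 * μ ^ 2) := by
    rw [show (4 : ℕ) = 2 + 1 + 1 from rfl, iteratedDeriv_succ, iteratedDeriv_succ, e2, h3, h4]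
  rw [e1, e2, e4, hsech, hF]
  set T : ℂ := (Real.tanh z : ℂ)
  linear_combination (Complex.exp (μ * z) * (a - 3 * μ ^ 2 * T)) * hroot
end

section
/- Let μ ∈ (1,2) be real and set λ = μ(μ−1)(2−μ) and η = μ(2−μ). Then λ > 0, and the function g(z) = 3μ² e^{μz} (1 − tanh z) is a nonzero bounded solution on ℝ of the ODE g'''' + 4Φ g'' + 4λ g' − 4 g'' + 3η² g = 0 with Φ(z) = 3 sech² z; moreover g(z) → 0 as z → +∞ and as z → −∞ (indeed |g(z)| ≤ C e^{−(2−μ)z} for z ≥ 0 and |g(z)| ≤ C e^{μz} for z ≤ 0, for some constant C). -/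
open Filter

section helpers

private lemma hasDerivAt_tanh' (x : ℝ) : HasDerivAt Real.tanh (1 - Real.tanh x ^ 2) x := by
  have hc : Real.cosh x ≠ 0 := (Real.cosh_pos x).ne'
  have h := (Real.hasDerivAt_sinh x).div (Real.hasDerivAt_cosh x) hc
  have heq : (Real.cosh x * Real.cosh x - Real.sinh x * Real.sinh x) / Real.cosh x ^ 2
      = 1 - Real.tanh x ^ 2 := by
    rw [Real.tanh_eq_sinh_div_cosh]
    have h1 := Real.cosh_sq_sub_sinh_sq x
    field_simp
  have hfun : Real.tanh = fun x => Real.sinh x / Real.cosh x := by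
    funext y; exact Real.tanh_eq_sinh_div_cosh y
  rw [heq] at h
  have e : Real.sinh / Real.cosh = Real.tanh := funext fun y => (Real.tanh_eq_sinh_div_cosh y).symm
  rw [e] at h
  exact h

private lemma key (μ : ℝ) (P dP : ℝ → ℝ) (hP : ∀ t, HasDerivAt P (dP t) t) (z : ℝ) :
    HasDerivAt (fun z' => Real.exp (μ * z') * P (Real.tanh z'))
      (Real.exp (μ * z) * (μ * P (Real.tanh z)
        + dP (Real.tanh z) * (1 - Real.tanh z ^ 2))) z := by
  have h1 : HasDerivAt (fun z' : ℝ => Real.exp (μ * z')) (μ * Real.exp (μ * z)) z := by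
    exact ((hasDerivAt_id' z).const_mul μ).exp.congr_deriv (by ring)
  have h2 := (hP (Real.tanh z)).comp z (hasDerivAt_tanh' z)
  have := h1.mul h2
  exact this.congr_deriv (by simp only [Function.comp_apply]; ring)

private lemma polyHD (a b c d e f t : ℝ) :
    HasDerivAt (fun t : ℝ => a + b*t + c*t^2 + d*t^3 + e*t^4 + f*t^5)
      (b + 2*c*t + 3*d*t^2 + 4*e*t^3 + 5*f*t^4) t := by
  have h := ((((((hasDerivAt_id t).const_mul b).add ((hasDerivAt_pow 2 t).const_mul c)).add
      ((hasDerivAt_pow 3 t).const_mul d)).add ((hasDerivAt_pow 4 t).const_mul e)).add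
      ((hasDerivAt_pow 5 t).const_mul f))
  have h2 := (hasDerivAt_const t a).add h
  have hf : (fun t : ℝ => a + b*t + c*t^2 + d*t^3 + e*t^4 + f*t^5) = ((fun _ : ℝ => a) +
      (((((fun y => b * id y) + fun y => c * y ^ 2) + fun y => d * y ^ 3) + fun y => e * y ^ 4)
        + fun y => f * y ^ 5)) := by
    funext x; simp only [Pi.add_apply, id_eq]; ring
  rw [hf]
  refine h2.congr_deriv ?_
  push_cast; ring

/-- exp(μz) times a quintic in tanh z. -/
private noncomputable def G (μ a b c d e f z : ℝ) : ℝ :=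
  Real.exp (μ*z) * (a + b*Real.tanh z + c*Real.tanh z^2 + d*Real.tanh z^3
    + e*Real.tanh z^4 + f*Real.tanh z^5)

private lemma Ghd (μ a b c d e : ℝ) (z : ℝ) :
    HasDerivAt (G μ a b c d e 0)
      (G μ (μ*a + b) (μ*b + 2*c) (μ*c + 3*d - b) (μ*d + 4*e - 2*c)
        (μ*e - 3*d) (-4*e) z) z := by
  have h := key μ (fun t => a + b*t + c*t^2 + d*t^3 + e*t^4 + 0*t^5)
    (fun t => b + 2*c*t + 3*d*t^2 + 4*e*t^3 + 5*0*t^4)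
    (fun t => polyHD a b c d e 0 t) z
  exact h.congr_deriv (by simp only [G]; ring)

private lemma sech_sq (z : ℝ) : (1 / Real.cosh z) ^ 2 = 1 - Real.tanh z ^ 2 := by
  have h1 := Real.cosh_sq_sub_sinh_sq z
  have hc : Real.cosh z ≠ 0 := (Real.cosh_pos z).ne'
  rw [Real.tanh_eq_sinh_div_cosh]
  field_simp
  linarith

private lemma one_sub_tanh (w : ℝ) : 1 - Real.tanh w = Real.exp (-w) / Real.cosh w := by
  rw [Real.tanh_eq_sinh_div_cosh, eq_div_iff (Real.cosh_pos w).ne']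
  have := Real.cosh_sub_sinh w
  field_simp
  linarith

end helpers

/-- For `μ ∈ (1,2)`, `λ = μ(μ−1)(2−μ)`, `η = μ(2−μ)`, the function
`g(z) = 3μ² e^{μz}(1 − tanh z)` is a nonzero bounded solution of
`g'''' + 4Φ g'' + 4λ g' − 4g'' + 3η² g = 0`, `Φ(z) = 3 sech² z`,
decaying at both infinities with explicit exponential rates. -/
theorem unstable_eigenmode_explicit (μ : ℝ) (hμ1 : 1 < μ) (hμ2 : μ < 2) :
    0 < μ * (μ - 1) * (2 - μ) ∧
    (∃ z : ℝ, (3 * μ ^ 2 * Real.exp (μ * z) * (1 - Real.tanh z)) ≠ 0) ∧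
    (∀ z : ℝ,
      iteratedDeriv 4 (fun z' : ℝ => 3 * μ ^ 2 * Real.exp (μ * z') * (1 - Real.tanh z')) z
        + 4 * (3 * (1 / Real.cosh z) ^ 2) *
            iteratedDeriv 2 (fun z' : ℝ => 3 * μ ^ 2 * Real.exp (μ * z') * (1 - Real.tanh z')) z
        + 4 * (μ * (μ - 1) * (2 - μ)) *
            deriv (fun z' : ℝ => 3 * μ ^ 2 * Real.exp (μ * z') * (1 - Real.tanh z')) z
        - 4 * iteratedDeriv 2 (fun z' : ℝ => 3 * μ ^ 2 * Real.exp (μ * z') * (1 - Real.tanh z')) z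
        + 3 * (μ * (2 - μ)) ^ 2 * (3 * μ ^ 2 * Real.exp (μ * z) * (1 - Real.tanh z)) = 0) ∧
    Tendsto (fun z : ℝ => 3 * μ ^ 2 * Real.exp (μ * z) * (1 - Real.tanh z)) atTop (nhds 0) ∧
    Tendsto (fun z : ℝ => 3 * μ ^ 2 * Real.exp (μ * z) * (1 - Real.tanh z)) atBot (nhds 0) ∧
    ∃ C : ℝ, 0 < C ∧
      (∀ z : ℝ, 0 ≤ z →
        |3 * μ ^ 2 * Real.exp (μ * z) * (1 - Real.tanh z)| ≤ C * Real.exp (-(2 - μ) * z)) ∧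
      (∀ z : ℝ, z ≤ 0 →
        |3 * μ ^ 2 * Real.exp (μ * z) * (1 - Real.tanh z)| ≤ C * Real.exp (μ * z)) := by
  have hμ0 : 0 < μ := by linarith
  -- helper: chained derivative with cleaned coefficients
  have H : ∀ a b c d e a' b' c' d' e' f' : ℝ,
      a' = μ*a + b → b' = μ*b + 2*c → c' = μ*c + 3*d - b → d' = μ*d + 4*e - 2*c →
      e' = μ*e - 3*d → f' = -4*e →
      ∀ z, HasDerivAt (G μ a b c d e 0) (G μ a' b' c' d' e' f' z) z := by
    intro a b c d e a' b' c' d' e' f' h1 h2 h3 h4 h5 h6 z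
    subst h1 h2 h3 h4 h5 h6
    exact Ghd μ a b c d e z
  -- the eigenfunction in G-form
  have hEq : (fun z' : ℝ => 3 * μ ^ 2 * Real.exp (μ * z') * (1 - Real.tanh z'))
      = G μ (3*μ^2) (-(3*μ^2)) 0 0 0 0 := by
    funext w; simp only [G]; ring
  -- successive derivatives
  have h0 := H (3*μ^2) (-(3*μ^2)) 0 0 0
      (3*μ^2*(μ-1)) (-(3*μ^3)) (3*μ^2) 0 0 0
      (by ring) (by ring) (by ring) (by ring) (by ring) (by ring)
  have h1 := H (3*μ^2*(μ-1)) (-(3*μ^3)) (3*μ^2) 0 0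
      (3*μ^2*(μ^2-2*μ)) (3*μ^2*(2-μ^2)) (6*μ^3) (-(6*μ^2)) 0 0
      (by ring) (by ring) (by ring) (by ring) (by ring) (by ring)
  have h2 := H (3*μ^2*(μ^2-2*μ)) (3*μ^2*(2-μ^2)) (6*μ^3) (-(6*μ^2)) 0
      (3*μ^2*(2-3*μ^2+μ^3)) (3*μ^2*(6*μ-μ^3)) (3*μ^2*(3*μ^2-8)) (-(18*μ^3)) (18*μ^2) 0
      (by ring) (by ring) (by ring) (by ring) (by ring) (by ring)
  have h3 := H (3*μ^2*(2-3*μ^2+μ^3)) (3*μ^2*(6*μ-μ^3)) (3*μ^2*(3*μ^2-8)) (-(18*μ^3)) (18*μ^2)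
      (3*μ^2*(8*μ-4*μ^3+μ^4)) (3*μ^2*(12*μ^2-μ^4-16)) (3*μ^2*(4*μ^3-32*μ))
      (3*μ^2*(40-12*μ^2)) (72*μ^3) (-(72*μ^2))
      (by ring) (by ring) (by ring) (by ring) (by ring) (by ring)
  have hd0 : deriv (G μ (3*μ^2) (-(3*μ^2)) 0 0 0 0)
      = G μ (3*μ^2*(μ-1)) (-(3*μ^3)) (3*μ^2) 0 0 0 := funext fun z => (h0 z).deriv
  have hd1 : deriv (G μ (3*μ^2*(μ-1)) (-(3*μ^3)) (3*μ^2) 0 0 0)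
      = G μ (3*μ^2*(μ^2-2*μ)) (3*μ^2*(2-μ^2)) (6*μ^3) (-(6*μ^2)) 0 0 :=
    funext fun z => (h1 z).deriv
  have hd2 : deriv (G μ (3*μ^2*(μ^2-2*μ)) (3*μ^2*(2-μ^2)) (6*μ^3) (-(6*μ^2)) 0 0)
      = G μ (3*μ^2*(2-3*μ^2+μ^3)) (3*μ^2*(6*μ-μ^3)) (3*μ^2*(3*μ^2-8)) (-(18*μ^3)) (18*μ^2) 0 :=
    funext fun z => (h2 z).deriv
  have hd3 : deriv (G μ (3*μ^2*(2-3*μ^2+μ^3)) (3*μ^2*(6*μ-μ^3)) (3*μ^2*(3*μ^2-8))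
        (-(18*μ^3)) (18*μ^2) 0)
      = G μ (3*μ^2*(8*μ-4*μ^3+μ^4)) (3*μ^2*(12*μ^2-μ^4-16)) (3*μ^2*(4*μ^3-32*μ))
        (3*μ^2*(40-12*μ^2)) (72*μ^3) (-(72*μ^2)) :=
    funext fun z => (h3 z).deriv
  have hit2 : iteratedDeriv 2 (G μ (3*μ^2) (-(3*μ^2)) 0 0 0 0)
      = G μ (3*μ^2*(μ^2-2*μ)) (3*μ^2*(2-μ^2)) (6*μ^3) (-(6*μ^2)) 0 0 := by
    rw [iteratedDeriv_succ, iteratedDeriv_one, hd0, hd1]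
  have hit4 : iteratedDeriv 4 (G μ (3*μ^2) (-(3*μ^2)) 0 0 0 0)
      = G μ (3*μ^2*(8*μ-4*μ^3+μ^4)) (3*μ^2*(12*μ^2-μ^4-16)) (3*μ^2*(4*μ^3-32*μ))
        (3*μ^2*(40-12*μ^2)) (72*μ^3) (-(72*μ^2)) := by
    rw [iteratedDeriv_succ, iteratedDeriv_succ, iteratedDeriv_succ, iteratedDeriv_one,
      hd0, hd1, hd2, hd3]
  -- positivity of the eigenfunction
  have hpos : ∀ w : ℝ, 0 < 3 * μ ^ 2 * Real.exp (μ * w) * (1 - Real.tanh w) := by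
    intro w
    have h3 : (0:ℝ) < 3 * μ ^ 2 := by nlinarith
    refine mul_pos (mul_pos h3 (Real.exp_pos _)) ?_
    rw [one_sub_tanh]
    exact div_pos (Real.exp_pos _) (Real.cosh_pos _)
  -- rational form
  have hform : ∀ w : ℝ, 3 * μ ^ 2 * Real.exp (μ * w) * (1 - Real.tanh w)
      = 6 * μ ^ 2 * Real.exp (μ * w) / (Real.exp (2 * w) + 1) := by
    intro w
    have h2w : Real.exp (2 * w) = Real.exp w * Real.exp w := by
      rw [← Real.exp_add]; ring_nf
    rw [one_sub_tanh, Real.cosh_eq, Real.exp_neg, h2w]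
    have hw := Real.exp_ne_zero w
    have hw2 : Real.exp w * Real.exp w + 1 ≠ 0 := by positivity
    field_simp
    ring
  have hden : ∀ w : ℝ, (0:ℝ) < Real.exp (2 * w) + 1 := fun w => by positivity
  -- bound 1 : valid for all w
  have bound1 : ∀ w : ℝ, 3 * μ ^ 2 * Real.exp (μ * w) * (1 - Real.tanh w)
      ≤ 6 * μ ^ 2 * Real.exp (-(2 - μ) * w) := by
    intro w
    rw [hform, div_le_iff₀ (hden w)]
    have hx : Real.exp (-(2 - μ) * w) * Real.exp (2 * w) = Real.exp (μ * w) := by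
      rw [← Real.exp_add]; ring_nf
    have hp : (0:ℝ) < 6 * μ ^ 2 * Real.exp (-(2 - μ) * w) := by positivity
    nlinarith [hx, hp]
  -- bound 2 : valid for all w
  have bound2 : ∀ w : ℝ, 3 * μ ^ 2 * Real.exp (μ * w) * (1 - Real.tanh w)
      ≤ 6 * μ ^ 2 * Real.exp (μ * w) := by
    intro w
    rw [hform]
    apply div_le_self (by positivity)
    nlinarith [Real.exp_pos (2 * w)]
  -- limits
  have t_top : Tendsto (fun w : ℝ => 6 * μ ^ 2 * Real.exp (-(2 - μ) * w)) atTop (nhds 0) := by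
    have hm : Tendsto (fun w : ℝ => (2 - μ) * w) atTop atTop :=
      Tendsto.const_mul_atTop (by linarith) tendsto_id
    have h2 := Real.tendsto_exp_atBot.comp (tendsto_neg_atTop_atBot.comp hm)
    have h2' : Tendsto (fun w : ℝ => Real.exp (-(2 - μ) * w)) atTop (nhds 0) := by
      refine Tendsto.congr (fun w => ?_) h2
      simp only [Function.comp_apply]
      ring_nf
    simpa using h2'.const_mul (6 * μ ^ 2)
  have t_bot : Tendsto (fun w : ℝ => 6 * μ ^ 2 * Real.exp (μ * w)) atBot (nhds 0) := by
    have hm : Tendsto (fun w : ℝ => μ * w) atBot atBot :=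
      Tendsto.const_mul_atBot hμ0 tendsto_id
    have h2 := Real.tendsto_exp_atBot.comp hm
    have h2' : Tendsto (fun w : ℝ => Real.exp (μ * w)) atBot (nhds 0) := by
      refine Tendsto.congr (fun w => ?_) h2
      simp only [Function.comp_apply]
    simpa using h2'.const_mul (6 * μ ^ 2)
  refine ⟨mul_pos (mul_pos hμ0 (by linarith)) (by linarith), ⟨0, by simpa [Real.tanh_zero] using (hpos 0).ne'⟩, ?_, ?_, ?_, ?_⟩
  · -- the ODE
    intro z
    rw [hEq, hit4, hit2, hd0, sech_sq]
    simp only [G]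
    ring
  · exact tendsto_of_tendsto_of_tendsto_of_le_of_le tendsto_const_nhds t_top
      (fun w => (hpos w).le) (fun w => bound1 w)
  · exact tendsto_of_tendsto_of_tendsto_of_le_of_le tendsto_const_nhds t_bot
      (fun w => (hpos w).le) (fun w => bound2 w)
  · refine ⟨6 * μ ^ 2, by nlinarith, fun z _ => ?_, fun z _ => ?_⟩
    · rw [abs_of_pos (hpos z)]; exact bound1 z
    · rw [abs_of_pos (hpos z)]; exact bound2 z
end
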